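/- arXiv:2201.02752 — 7 statements merged into one kernel-verified Lean document; each statement's English description precedes it below -/
import Mathlib

section
/- Let ρ ∈ (-1,1). The function g(y) = -log((√(1+2ρy+y²) - y - ρ)/(1-ρ)) is the unique C^1 solution on ℝ of the ODE g'(y)²(1+2ρy+y²) = 1 with initial condition g(0)=0 and satisfying g(y)/y > 0 for all y ≠ 0. -/
theorem stmt2 (ρ : ℝ) (hρ₁ : -1 < ρ) (hρ₂ : ρ < 1) (g : ℝ → ℝ)
    (hg : ∀ y : ℝ, g y = -Real.log ((Real.sqrt (1 + 2 * ρ * y + y ^ 2) - y - ρ) / (1 - ρ))) :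
    (ContDiff ℝ 1 g ∧ g 0 = 0 ∧
      (∀ y : ℝ, (deriv g y) ^ 2 * (1 + 2 * ρ * y + y ^ 2) = 1) ∧
      (∀ y : ℝ, y ≠ 0 → g y / y > 0)) ∧
    ∀ h : ℝ → ℝ, ContDiff ℝ 1 h → h 0 = 0 →
      (∀ y : ℝ, (deriv h y) ^ 2 * (1 + 2 * ρ * y + y ^ 2) = 1) →
      (∀ y : ℝ, y ≠ 0 → h y / y > 0) → h = g := by
  have h1ρ : (0:ℝ) < 1 - ρ := by linarith
  have hQpos : ∀ y : ℝ, 0 < 1 + 2 * ρ * y + y ^ 2 := by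
    intro y; nlinarith [sq_nonneg (y + ρ), sq_nonneg ρ]
  have hspos : ∀ y : ℝ, 0 < Real.sqrt (1 + 2 * ρ * y + y ^ 2) :=
    fun y => Real.sqrt_pos.2 (hQpos y)
  have hsq : ∀ y : ℝ, Real.sqrt (1 + 2 * ρ * y + y ^ 2) ^ 2 = 1 + 2 * ρ * y + y ^ 2 :=
    fun y => Real.sq_sqrt (hQpos y).le
  have hupos : ∀ y : ℝ, 0 < Real.sqrt (1 + 2 * ρ * y + y ^ 2) - y - ρ := by
    intro y
    have h1 : (y + ρ) ^ 2 < 1 + 2 * ρ * y + y ^ 2 := by nlinarith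
    have h2 : |y + ρ| < Real.sqrt (1 + 2 * ρ * y + y ^ 2) := by
      rw [← Real.sqrt_sq_eq_abs]
      exact Real.sqrt_lt_sqrt (sq_nonneg _) h1
    have := le_abs_self (y + ρ)
    linarith
  have hgeq : g = fun y =>
      -Real.log ((Real.sqrt (1 + 2 * ρ * y + y ^ 2) - y - ρ) / (1 - ρ)) := funext hg
  -- derivative of g
  have hderiv : ∀ y : ℝ, HasDerivAt g (1 / Real.sqrt (1 + 2 * ρ * y + y ^ 2)) y := by
    intro y
    have hQ : HasDerivAt (fun y : ℝ => 1 + 2 * ρ * y + y ^ 2) (2 * ρ + 2 * y) y := by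
      have h1 := (((hasDerivAt_id y).const_mul (2 * ρ)).const_add 1).add (hasDerivAt_pow 2 y)
      refine HasDerivAt.congr_deriv h1 ?_
      simp
      try ring
    have hs := hQ.sqrt (hQpos y).ne'
    have hu := (hs.sub (hasDerivAt_id y)).sub_const ρ
    have hf := hu.div_const (1 - ρ)
    have hne : (Real.sqrt (1 + 2 * ρ * y + y ^ 2) - y - ρ) / (1 - ρ) ≠ 0 :=
      (div_pos (hupos y) h1ρ).ne'
    have hlog := (hf.log hne).neg
    rw [hgeq]
    refine HasDerivAt.congr_deriv hlog ?_
    have hs0 := hspos y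
    have hu0 := hupos y
    have hq := hsq y
    simp only [Pi.sub_apply, id]
    field_simp
    nlinarith [hsq y, hspos y, hupos y]
  have hderivg : ∀ y : ℝ, deriv g y = 1 / Real.sqrt (1 + 2 * ρ * y + y ^ 2) :=
    fun y => (hderiv y).deriv
  have hg0 : g 0 = 0 := by
    have he : (1:ℝ) + 2 * ρ * 0 + 0 ^ 2 = 1 := by ring
    rw [hg 0, he, Real.sqrt_one]
    have he2 : (1:ℝ) - 0 - ρ = 1 - ρ := by ring
    rw [he2, div_self h1ρ.ne', Real.log_one, neg_zero]
  have hODEg : ∀ y : ℝ, (deriv g y) ^ 2 * (1 + 2 * ρ * y + y ^ 2) = 1 := by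
    intro y
    rw [hderivg y, div_pow, one_pow, hsq y]
    exact one_div_mul_cancel (hQpos y).ne'
  have hcd : ContDiff ℝ 1 g := by
    rw [hgeq]
    rw [contDiff_iff_contDiffAt]
    intro y
    have hQcd : ContDiffAt ℝ 1 (fun y : ℝ => 1 + 2 * ρ * y + y ^ 2) y := by
      fun_prop
    have hs : ContDiffAt ℝ 1 (fun y : ℝ => Real.sqrt (1 + 2 * ρ * y + y ^ 2)) y :=
      (Real.contDiffAt_sqrt (hQpos y).ne').comp y hQcd
    have hu : ContDiffAt ℝ 1
        (fun y : ℝ => (Real.sqrt (1 + 2 * ρ * y + y ^ 2) - y - ρ) / (1 - ρ)) y :=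
      ((hs.sub contDiffAt_id).sub contDiffAt_const).div_const _
    exact (hu.log (div_pos (hupos y) h1ρ).ne').neg
  have hmono : StrictMono g := by
    apply strictMono_of_deriv_pos
    intro x
    rw [hderivg x]
    exact one_div_pos.2 (hspos x)
  have hsigng : ∀ y : ℝ, y ≠ 0 → g y / y > 0 := by
    intro y hy
    rcases lt_or_gt_of_ne hy with h | h
    · have : g y < 0 := by have := hmono h; rwa [hg0] at this
      exact div_pos_of_neg_of_neg this h
    · have : 0 < g y := by have := hmono h; rwa [hg0] at this
      exact div_pos this h
  refine ⟨⟨hcd, hg0, hODEg, hsigng⟩, ?_⟩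
  intro h hC h0val hODE hsign
  have hne : ∀ y : ℝ, deriv h y ≠ 0 := by
    intro y h0
    have := hODE y
    rw [h0] at this
    norm_num at this
  have hcont : Continuous (deriv h) := hC.continuous_deriv le_rfl
  have hpos : ∀ y : ℝ, 0 < deriv h y := by
    by_contra hc
    push_neg at hc
    obtain ⟨a, ha⟩ := hc
    have ha' : deriv h a < 0 := lt_of_le_of_ne ha (hne a)
    have hallneg : ∀ b : ℝ, deriv h b < 0 := by
      intro b
      rcases lt_or_gt_of_ne (hne b) with hb | hb
      · exact hb
      · exfalso
        have hmem : (0:ℝ) ∈ Set.uIcc (deriv h a) (deriv h b) :=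
          Set.mem_uIcc.2 (Or.inl ⟨ha'.le, hb.le⟩)
        obtain ⟨c, _, hc0⟩ := intermediate_value_uIcc hcont.continuousOn hmem
        exact hne c hc0
    have hanti : StrictAnti h := strictAnti_of_deriv_neg hallneg
    have h1 : h 1 < 0 := by
      have := hanti (show (0:ℝ) < 1 by norm_num); rwa [h0val] at this
    have := hsign 1 one_ne_zero
    simp at this
    linarith
  have heq : ∀ y : ℝ, deriv h y = deriv g y := by
    intro y
    rw [hderivg y]
    set a := deriv h y with hadef
    set s := Real.sqrt (1 + 2 * ρ * y + y ^ 2) with hsdef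
    have h1 : a ^ 2 * (1 + 2 * ρ * y + y ^ 2) = 1 := hODE y
    have hs0 : 0 < s := hspos y
    have hq : s ^ 2 = 1 + 2 * ρ * y + y ^ 2 := hsq y
    have ha0 : 0 < a := hpos y
    have h2 : (a * s - 1) * (a * s + 1) = 0 := by nlinarith
    rcases mul_eq_zero.1 h2 with h3 | h3
    · field_simp
      linarith
    · nlinarith
  have hdiffh : Differentiable ℝ h := hC.differentiable one_ne_zero
  have hdiffg : Differentiable ℝ g := hcd.differentiable one_ne_zero
  funext y
  have key : (h - g) y = (h - g) 0 := by
    apply is_const_of_deriv_eq_zero (hdiffh.sub hdiffg)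
    intro x
    rw [deriv_sub (hdiffh x) (hdiffg x), heq x, sub_self]
  simp only [Pi.sub_apply, h0val, hg0, sub_zero] at key
  linarith
end

section
/- Let H ∈ (0,1/2], ρ ∈ (-1,1), q(y) = 1 + 2ρy/(2H+1) + y²/(2H+1)², and define φ(y,z) = ((1-2H)z + √((1-2H)²z² + 8H·q(y)))/(2q(y)) for (y,z) ∈ ℝ × [0,∞). Then α = 1 is the unique positive solution of the fixed-point equation α = φ(0, 1/φ(0, 1/α)). -/
theorem stmt6 (H ρ : ℝ) (hH₁ : 0 < H) (hH₂ : H ≤ 1 / 2) (hρ₁ : -1 < ρ) (hρ₂ : ρ < 1)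
    (q : ℝ → ℝ)
    (hq : ∀ y : ℝ, q y = 1 + 2 * ρ * y / (2 * H + 1) + y ^ 2 / (2 * H + 1) ^ 2)
    (φ : ℝ → ℝ → ℝ)
    (hφ : ∀ y z : ℝ, 0 ≤ z → φ y z =
      ((1 - 2 * H) * z + Real.sqrt ((1 - 2 * H) ^ 2 * z ^ 2 + 8 * H * q y)) / (2 * q y)) :
    (1 : ℝ) = φ 0 (1 / φ 0 (1 / 1)) ∧
    ∀ α : ℝ, α > 0 → α = φ 0 (1 / φ 0 (1 / α)) → α = 1 := by
  have hq0 : q 0 = 1 := by rw [hq]; ring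
  have key : ∀ z : ℝ, 0 ≤ z →
      0 < φ 0 z ∧ (φ 0 z) ^ 2 = (1 - 2 * H) * z * (φ 0 z) + 2 * H := by
    intro z hz
    have hφz := hφ 0 z hz
    rw [hq0] at hφz
    set s := Real.sqrt ((1 - 2 * H) ^ 2 * z ^ 2 + 8 * H * 1) with hs
    have hsnn : 0 ≤ s := Real.sqrt_nonneg _
    have hs2 : s ^ 2 = (1 - 2 * H) ^ 2 * z ^ 2 + 8 * H := by
      rw [hs, Real.sq_sqrt]
      · ring
      · nlinarith [sq_nonneg ((1 - 2 * H) * z)]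
    have hspos : 0 < s := by nlinarith [sq_nonneg ((1 - 2 * H) * z)]
    have haz : 0 ≤ (1 - 2 * H) * z := by
      apply mul_nonneg (by linarith) hz
    constructor
    · rw [hφz]; positivity
    · rw [hφz]
      field_simp
      linear_combination hs2
  have hφ1 : φ 0 1 = 1 := by
    obtain ⟨hpos, heq⟩ := key 1 (by norm_num)
    have hfac : (φ 0 1 - 1) * (φ 0 1 + 2 * H) = 0 := by linear_combination heq
    rcases mul_eq_zero.mp hfac with h | h
    · linarith
    · linarith
  constructor
  · rw [show (1 : ℝ) / 1 = 1 by norm_num, hφ1, show (1 : ℝ) / 1 = 1 by norm_num, hφ1]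
  · intro α hα hfix
    obtain ⟨hβpos, hβeq⟩ := key (1 / α) (by positivity)
    set β := φ 0 (1 / α) with hβ
    obtain ⟨hαpos', hαeq⟩ := key (1 / β) (by positivity)
    rw [← hfix] at hαeq
    have hβne : β ≠ 0 := ne_of_gt hβpos
    have hαne : α ≠ 0 := ne_of_gt hα
    have h1 : α ^ 2 * β = (1 - 2 * H) * α + 2 * H * β := by
      field_simp at hαeq
      linarith
    have h2 : β ^ 2 * α = (1 - 2 * H) * β + 2 * H * α := by
      field_simp at hβeq
      linarith
    have hsum : (α * β) * (α + β) = 1 * (α + β) := by linear_combination h1 + h2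
    have hab : α * β = 1 := mul_right_cancel₀ (by positivity) hsum
    have h1β : 1 / β = α := by
      field_simp
      linarith [hab]
    rw [h1β] at hαeq
    have h2H : 2 * H * α ^ 2 = 2 * H := by linear_combination hαeq
    have hα2 : α ^ 2 = 1 := mul_left_cancel₀ (by positivity : (2 * H : ℝ) ≠ 0) (by linarith)
    have hfac : (α - 1) * (α + 1) = 0 := by linear_combination hα2
    rcases mul_eq_zero.mp hfac with h | h
    · linarith
    · linarith
end

section
/- Let H ∈ (0,1/2], ρ ∈ (-1,1), q(y) = 1+2ρy/(2H+1)+y²/(2H+1)², φ(y,z) = ((1-2H)z + √((1-2H)²z² + 8H q(y)))/(2q(y)). Then φ : ℝ × [0,∞) → (0,∞) is strictly positive, is nondecreasing in z, and ∂φ/∂z is uniformly bounded on ℝ × [0,∞). -/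
theorem stmt8 (H ρ : ℝ) (hH₁ : 0 < H) (hH₂ : H ≤ 1 / 2) (hρ₁ : -1 < ρ) (hρ₂ : ρ < 1)
    (q : ℝ → ℝ)
    (hq : ∀ y : ℝ, q y = 1 + 2 * ρ * y / (2 * H + 1) + y ^ 2 / (2 * H + 1) ^ 2)
    (φ : ℝ → ℝ → ℝ)
    (hφ : ∀ y z : ℝ, φ y z =
      ((1 - 2 * H) * z + Real.sqrt ((1 - 2 * H) ^ 2 * z ^ 2 + 8 * H * q y)) / (2 * q y)) :
    (∀ y z : ℝ, 0 ≤ z → 0 < φ y z) ∧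
    (∀ y z₁ z₂ : ℝ, 0 ≤ z₁ → z₁ ≤ z₂ → φ y z₁ ≤ φ y z₂) ∧
    ∃ C : ℝ, ∀ y z : ℝ, 0 ≤ z → |deriv (φ y) z| ≤ C := by
  have h2H : (0:ℝ) < 2*H+1 := by linarith
  have hρsq : 0 < 1 - ρ^2 := by nlinarith
  have hq' : ∀ y, 1 - ρ^2 ≤ q y := by
    intro y
    rw [hq]
    have h1 : (2*H+1) ≠ 0 := ne_of_gt h2H
    have key : 1 + 2*ρ*y/(2*H+1) + y^2/(2*H+1)^2 - (1-ρ^2) = (ρ + y/(2*H+1))^2 := by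
      field_simp; ring
    nlinarith [sq_nonneg (ρ + y/(2*H+1))]
  have hqpos : ∀ y, 0 < q y := fun y => lt_of_lt_of_le hρsq (hq' y)
  have h12H : (0:ℝ) ≤ 1 - 2*H := by linarith
  have ha1 : (1 - 2*H)^2 ≤ 1 := by nlinarith
  refine ⟨?_, ?_, ?_⟩
  · intro y z hz
    rw [hφ]
    apply div_pos _ (by have := hqpos y; positivity)
    have hs : 0 < Real.sqrt ((1 - 2 * H) ^ 2 * z ^ 2 + 8 * H * q y) := by
      apply Real.sqrt_pos.mpr
      have := hqpos y
      positivity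
    nlinarith [mul_nonneg h12H hz]
  · intro y z₁ z₂ hz₁ h12
    rw [hφ, hφ]
    have := hqpos y
    gcongr <;> nlinarith
  · refine ⟨1/(1-ρ^2), ?_⟩
    intro y z hz
    set a := (1-2*H)^2 with ha
    set c := 8*H*q y with hc
    have hqy := hqpos y
    have hann : 0 ≤ a := sq_nonneg _
    have hcpos : 0 < c := by rw [hc]; positivity
    have hgpos : 0 < a*z^2 + c := by positivity
    have hg : HasDerivAt (fun z : ℝ => a*z^2 + c) (a*(2*z^1)) z :=
      ((hasDerivAt_pow 2 z).const_mul a).add_const c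
    have hs : HasDerivAt (fun z : ℝ => Real.sqrt (a*z^2 + c))
        ((a*(2*z^1)) / (2 * Real.sqrt (a*z^2 + c))) z := hg.sqrt (ne_of_gt hgpos)
    have hφd : HasDerivAt (φ y)
        (((1-2*H)*1 + (a*(2*z^1)) / (2 * Real.sqrt (a*z^2 + c))) / (2 * q y)) z := by
      have hfun : φ y = fun z => ((1 - 2*H)*z + Real.sqrt (a*z^2 + c)) / (2 * q y) :=
        funext fun z => hφ y z
      rw [hfun]
      exact (((hasDerivAt_id z).const_mul (1-2*H)).add hs).div_const (2 * q y)
    rw [hφd.deriv]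
    have hspos : 0 < Real.sqrt (a*z^2 + c) := Real.sqrt_pos.mpr hgpos
    have haz : a*z ≤ Real.sqrt (a*z^2 + c) := by
      have h1 : 0 ≤ a*z := mul_nonneg hann hz
      have h2 : (a*z)^2 ≤ a*z^2 + c := by nlinarith [sq_nonneg z, hcpos.le]
      calc a*z = Real.sqrt ((a*z)^2) := (Real.sqrt_sq h1).symm
        _ ≤ Real.sqrt (a*z^2 + c) := Real.sqrt_le_sqrt h2
    have hterm : (a*(2*z^1)) / (2 * Real.sqrt (a*z^2 + c)) ≤ 1 := by
      rw [div_le_one (by positivity)]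
      nlinarith [hspos]
    have htermnn : 0 ≤ (a*(2*z^1)) / (2 * Real.sqrt (a*z^2 + c)) := by
      apply div_nonneg _ (by positivity)
      have : (0:ℝ) ≤ z^1 := by positivity
      positivity
    have hnum : ((1-2*H)*1 + (a*(2*z^1)) / (2 * Real.sqrt (a*z^2 + c))) ≤ 2 := by nlinarith
    have hnumnn : 0 ≤ ((1-2*H)*1 + (a*(2*z^1)) / (2 * Real.sqrt (a*z^2 + c))) := by nlinarith
    rw [abs_of_nonneg (by positivity)]
    rw [div_le_div_iff₀ (by positivity) hρsq]
    nlinarith [hq' y, mul_le_mul_of_nonneg_right hnum hρsq.le]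
end

section
/- Suppose v : (0,∞) → (0,∞) is continuous and f : (0,∞) → (0,∞) is differentiable with locally Lipschitz derivative. Define g(s) = log(K/s)/f(s) for a fixed K > 0. Then |g'(s)·v(s)| = 1 for almost every s > 0 together with g(K) = 0 and positivity of f holds if and only if f(s) = log(K/s)/∫_s^K dx/v(x) for s ≠ K and f(K) = v(K)/K. -/
open Set MeasureTheory

private lemma const_of_hasDerivAt_zero' {φ : ℝ → ℝ}
    (h : ∀ x ∈ Ioi (0:ℝ), HasDerivAt φ 0 x) {x y : ℝ}
    (hx : x ∈ Ioi (0:ℝ)) (hy : y ∈ Ioi (0:ℝ)) : φ x = φ y := by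
  have h0 : (ContinuousLinearMap.smulRight (1 : ℝ →L[ℝ] ℝ) (0:ℝ)) = 0 := by
    ext
    simp
  refine (convex_Ioi (0:ℝ)).is_const_of_fderivWithin_eq_zero
    (fun z hz => ((h z hz).differentiableAt).differentiableWithinAt) (fun z hz => ?_) hx hy
  rw [fderivWithin_of_isOpen isOpen_Ioi hz]
  have h2 := (h z hz).hasFDerivAt
  rw [show ContinuousLinearMap.toSpanSingleton ℝ (0:ℝ) = 0 by ext; simp] at h2
  exact h2.fderiv

theorem stmt13 (K : ℝ) (hK : 0 < K) (v f : ℝ → ℝ)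
    (hv : ContinuousOn v (Ioi 0)) (hvpos : ∀ s ∈ Ioi (0 : ℝ), 0 < v s)
    (hfpos : ∀ s ∈ Ioi (0 : ℝ), 0 < f s)
    (hfdiff : DifferentiableOn ℝ f (Ioi 0))
    (hflip : ∀ C : Set ℝ, IsCompact C → C ⊆ Ioi 0 →
      ∃ L : NNReal, LipschitzOnWith L (deriv f) C)
    (g : ℝ → ℝ) (hg : ∀ s ∈ Ioi (0 : ℝ), g s = Real.log (K / s) / f s) :
    ((∀ᵐ s ∂(volume : Measure ℝ).restrict (Ioi 0), |deriv g s * v s| = 1) ∧ g K = 0)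
    ↔ ((∀ s ∈ Ioi (0 : ℝ), s ≠ K → f s = Real.log (K / s) / ∫ x in s..K, 1 / v x) ∧
        f K = v K / K) := by
  have hKm : K ∈ Ioi (0:ℝ) := hK
  set F : ℝ → ℝ := fun s => ∫ x in s..K, 1 / v x with hF
  have hgK : g K = 0 := by rw [hg K hKm, div_self hK.ne', Real.log_one, zero_div]
  have hFK : F K = 0 := intervalIntegral.integral_same
  have hw : ContinuousOn (fun x => 1 / v x) (Ioi 0) :=
    continuousOn_const.div hv (fun x hx => (hvpos x hx).ne')
  have hsub : ∀ a b : ℝ, a ∈ Ioi (0:ℝ) → b ∈ Ioi (0:ℝ) → uIcc a b ⊆ Ioi 0 := by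
    intro a b ha hb x hx
    exact lt_of_lt_of_le (lt_min ha hb) hx.1
  have hinteg : ∀ a b : ℝ, a ∈ Ioi (0:ℝ) → b ∈ Ioi (0:ℝ) →
      IntervalIntegrable (fun x => 1 / v x) volume a b := fun a b ha hb =>
    (hw.mono (hsub a b ha hb)).intervalIntegrable
  -- FTC : derivative of F
  have hFder : ∀ s ∈ Ioi (0:ℝ), HasDerivAt F (-(1 / v s)) s := by
    intro s hs
    have hs0 : (0:ℝ) < s := hs
    set a : ℝ := min s K / 2 with ha
    have ha0 : a ∈ Ioi (0:ℝ) := by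
      simp only [mem_Ioi, ha]
      have : 0 < min s K := lt_min hs0 hK
      linarith
    have hGa : HasDerivAt (fun t => ∫ x in a..t, 1 / v x) (1 / v s) s :=
      intervalIntegral.integral_hasDerivAt_right (hinteg a s ha0 hs)
        (hw.stronglyMeasurableAtFilter isOpen_Ioi s hs)
        (hw.continuousAt (Ioi_mem_nhds hs0))
    have heq : ∀ t ∈ Ioi (0:ℝ), F t = (∫ x in a..K, 1 / v x) - ∫ x in a..t, 1 / v x := by
      intro t ht
      have h3 := intervalIntegral.integral_add_adjacent_intervals
        (hinteg a t ha0 ht) (hinteg t K ht hKm)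
      simp only [hF]
      linarith
    have hC : HasDerivAt (fun t => (∫ x in a..K, 1 / v x) - ∫ x in a..t, 1 / v x)
        (-(1 / v s)) s := by
      exact ((hasDerivAt_const s (∫ x in a..K, 1 / v x)).sub hGa).congr_deriv (by ring)
    exact hC.congr_of_eventuallyEq
      (Filter.eventuallyEq_of_mem (Ioi_mem_nhds hs0) (fun t ht => heq t ht))
  -- continuity of deriv f
  have hf'cont : ∀ s ∈ Ioi (0:ℝ), ContinuousAt (deriv f) s := by
    intro s hs
    have hs0 : (0:ℝ) < s := hs
    obtain ⟨L, hL⟩ := hflip (Icc (s/2) (s+1)) isCompact_Icc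
      (fun x hx => lt_of_lt_of_le (by linarith) hx.1)
    exact hL.continuousOn.continuousAt (Icc_mem_nhds (by linarith) (by linarith))
  -- derivative of g
  have hgder : ∀ s ∈ Ioi (0:ℝ), HasDerivAt g
      ((-s⁻¹ * f s - (Real.log K - Real.log s) * deriv f s) / (f s)^2) s := by
    intro s hs
    have hs0 : (0:ℝ) < s := hs
    have hfd : HasDerivAt f (deriv f s) s :=
      (hfdiff.differentiableAt (Ioi_mem_nhds hs0)).hasDerivAt
    have hN : HasDerivAt (fun t : ℝ => Real.log K - Real.log t) (-s⁻¹) s := by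
      exact ((hasDerivAt_const s (Real.log K)).sub (Real.hasDerivAt_log hs0.ne')).congr_deriv (by ring)
    have hdiv := hN.div hfd (hfpos s hs).ne'
    refine hdiv.congr_of_eventuallyEq
      (Filter.eventuallyEq_of_mem (Ioi_mem_nhds hs0) (fun t ht => ?_))
    have ht0 : (0:ℝ) < t := ht
    rw [hg t ht, Real.log_div hK.ne' ht0.ne']
    rfl
  constructor
  · rintro ⟨hae, -⟩
    -- continuity of s ↦ deriv g s * v s
    have hhcont : ContinuousOn (fun s => deriv g s * v s) (Ioi 0) := by
      have hc : ContinuousOn (fun s : ℝ =>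
          ((-s⁻¹ * f s - (Real.log K - Real.log s) * deriv f s) / (f s)^2) * v s) (Ioi 0) := by
        refine ContinuousOn.mul (ContinuousOn.div ?_ (hfdiff.continuousOn.pow 2)
          (fun x hx => pow_ne_zero 2 (hfpos x hx).ne')) hv
        refine ContinuousOn.sub (ContinuousOn.mul ?_ hfdiff.continuousOn)
          (ContinuousOn.mul (continuousOn_const.sub (Real.continuousOn_log.mono ?_))
            (fun x hx => (hf'cont x hx).continuousWithinAt))
        · exact (continuousOn_id.inv₀ (fun x hx => ne_of_gt hx)).neg
        · intro x hx
          exact (ne_of_gt hx)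
      exact hc.congr (fun s hs => by rw [(hgder s hs).deriv])
    -- a.e. → everywhere
    have hone : ∀ s ∈ Ioi (0:ℝ), |deriv g s * v s| = 1 := by
      by_contra hcon
      push_neg at hcon
      obtain ⟨s, hs, hne⟩ := hcon
      set U : Set ℝ := Ioi 0 ∩ (fun x => deriv g x * v x) ⁻¹' ({1, -1}ᶜ) with hU
      have hUopen : IsOpen U :=
        hhcont.isOpen_inter_preimage isOpen_Ioi (by
          exact (isClosed_singleton.union isClosed_singleton).isOpen_compl)
      have hsU : s ∈ U := by
        constructor
        · exact hs
        · simp only [mem_preimage, mem_compl_iff, mem_insert_iff, mem_singleton_iff]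
          intro h
          rcases h with h | h <;> rw [h] at hne <;> simp at hne
      have hpos : 0 < volume U := hUopen.measure_pos volume ⟨s, hsU⟩
      have hzero : volume U = 0 := by
        have h1 : (volume : Measure ℝ).restrict (Ioi 0)
            {x | ¬ |deriv g x * v x| = 1} = 0 := hae
        rw [Measure.restrict_apply' measurableSet_Ioi] at h1
        refine measure_mono_null ?_ h1
        intro x hx
        refine ⟨?_, hx.1⟩
        simp only [mem_setOf_eq]
        have hx2 := hx.2
        simp only [mem_preimage, mem_compl_iff, mem_insert_iff, mem_singleton_iff,
          not_or] at hx2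
        intro habs
        rcases abs_eq (by norm_num : (0:ℝ) ≤ 1) |>.mp habs with h | h
        · exact hx2.1 h
        · exact hx2.2 h
      exact absurd hzero hpos.ne'
    -- value at K is negative
    have hKneg : deriv g K * v K < 0 := by
      rw [(hgder K hKm).deriv]
      have hfK := hfpos K hKm
      have hvK := hvpos K hKm
      have : (-K⁻¹ * f K - (Real.log K - Real.log K) * deriv f K) / f K ^ 2
          = -(1 / (K * f K)) := by
        field_simp
        ring
      rw [this]
      have h1 : 0 < 1 / (K * f K) := by positivity
      nlinarith
    have hKn : deriv g K * v K = -1 := by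
      rcases abs_eq (by norm_num : (0:ℝ) ≤ 1) |>.mp (hone K hKm) with h | h
      · nlinarith
      · exact h
    -- sign constancy via IVT
    have hneg : ∀ s ∈ Ioi (0:ℝ), deriv g s * v s = -1 := by
      intro s hs
      rcases abs_eq (by norm_num : (0:ℝ) ≤ 1) |>.mp (hone s hs) with h1 | h1
      · exfalso
        have hsub2 : uIcc s K ⊆ Ioi 0 := hsub s K hs hKm
        have hIVT := intermediate_value_uIcc (hhcont.mono hsub2)
        have h0mem : (0:ℝ) ∈ uIcc (deriv g s * v s) (deriv g K * v K) := by
          rw [h1, hKn]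
          rw [mem_uIcc]
          norm_num
        obtain ⟨c, hc, hc0⟩ := hIVT h0mem
        have hc0' : deriv g c * v c = 0 := hc0
        have := hone c (hsub2 hc)
        rw [hc0'] at this
        norm_num at this
      · exact h1
    -- deriv g = -(1/v)
    have hdgv : ∀ s ∈ Ioi (0:ℝ), deriv g s = -(1 / v s) := by
      intro s hs
      have hvne := (hvpos s hs).ne'
      have h2 := hneg s hs
      field_simp
      linarith
    -- g = F
    have hgF : ∀ s ∈ Ioi (0:ℝ), g s = F s := by
      have hder0 : ∀ x ∈ Ioi (0:ℝ), HasDerivAt (fun t => g t - F t) 0 x := by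
        intro x hx
        have hdg : HasDerivAt g (deriv g x) x := ((hgder x hx).differentiableAt).hasDerivAt
        rw [hdgv x hx] at hdg
        exact (hdg.sub (hFder x hx)).congr_deriv (by ring)
      intro s hs
      have hc := const_of_hasDerivAt_zero' hder0 hs hKm
      rw [hgK, hFK] at hc
      linarith
    constructor
    · intro s hs hsK
      have hfne := (hfpos s hs).ne'
      have h1 : Real.log (K / s) / f s = F s := by rw [← hg s hs]; exact hgF s hs
      have h2 : Real.log (K / s) = F s * f s := (div_eq_iff hfne).mp h1
      have hlog : Real.log (K / s) ≠ 0 := by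
        intro h0
        rcases Real.log_eq_zero.mp h0 with h | h | h
        · have hs0 : (0:ℝ) < s := hs
          have : K / s ≠ 0 := div_ne_zero hK.ne' hs0.ne'
          exact this h
        · have hs0 : (0:ℝ) < s := hs
          rw [div_eq_one_iff_eq hs0.ne'] at h
          exact hsK h.symm
        · have hs0 : (0:ℝ) < s := hs
          have : 0 < K / s := div_pos hK hs0
          linarith
      have hFne : F s ≠ 0 := by
        intro h0
        rw [h0, zero_mul] at h2
        exact hlog h2
      rw [h2, mul_div_cancel_left₀ _ hFne]
    · have h1 : deriv g K = -(1 / (K * f K)) := by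
        rw [(hgder K hKm).deriv]
        have hfK := (hfpos K hKm).ne'
        field_simp
        ring
      have h2 := hneg K hKm
      rw [h1] at h2
      have hfK := hfpos K hKm
      have hvK := hvpos K hKm
      field_simp at h2 ⊢
      linarith
  · rintro ⟨hf1, hf2⟩
    refine ⟨?_, hgK⟩
    have hgF : ∀ s ∈ Ioi (0:ℝ), g s = F s := by
      intro s hs
      rcases eq_or_ne s K with rfl | hsK
      · rw [hgK, hFK]
      · have hs0 : (0:ℝ) < s := hs
        have hlog : Real.log (K / s) ≠ 0 := by
          intro h0
          rcases Real.log_eq_zero.mp h0 with h | h | h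
          · exact (div_ne_zero hK.ne' hs0.ne') h
          · rw [div_eq_one_iff_eq hs0.ne'] at h
            exact hsK h.symm
          · have : 0 < K / s := div_pos hK hs0
            linarith
        have hFne : F s ≠ 0 := by
          intro h0
          have hp := hfpos s hs
          rw [hf1 s hs hsK] at hp
          rw [show (∫ (x : ℝ) in s..K, 1 / v x) = (0:ℝ) from h0] at hp
          simp at hp
        rw [hg s hs, hf1 s hs hsK]
        field_simp
        rfl
    have hderiv : ∀ s ∈ Ioi (0:ℝ), deriv g s = -(1 / v s) := by
      intro s hs
      have hs0 : (0:ℝ) < s := hs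
      have heq : g =ᶠ[nhds s] F :=
        Filter.eventuallyEq_of_mem (Ioi_mem_nhds hs0) hgF
      rw [heq.deriv_eq, (hFder s hs).deriv]
    rw [ae_restrict_iff' measurableSet_Ioi]
    refine ae_of_all _ fun s hs => ?_
    rw [hderiv s hs]
    have hvne := (hvpos s hs).ne'
    have : -(1 / v s) * v s = -1 := by field_simp
    rw [this, abs_neg, abs_one]
end

section
/- Let φ : ℝ × [0,∞) → (0,∞) satisfy the hypotheses of the existence lemma, and define the Picard-type iteration g₀(y) = ∫₀^y φ(u,0) du and g_{n+1}(y) = ∫₀^y φ(u, u/g_n(u)) du. Then for all n ≥ 0 and all y ≠ 0: 0 < g₀(y)/y ≤ g_{2n}(y)/y ≤ g_{2n+2}(y)/y ≤ g_{2n+3}(y)/y ≤ g_{2n+1}(y)/y. -/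
open Set MeasureTheory intervalIntegral

lemma ratio_mono_aux {f g : ℝ → ℝ} {y : ℝ} (hy : y ≠ 0)
    (hf : IntervalIntegrable f volume 0 y) (hg : IntervalIntegrable g volume 0 y)
    (hle : ∀ u ∈ uIcc (0:ℝ) y, f u ≤ g u) :
    (∫ u in (0:ℝ)..y, f u) / y ≤ (∫ u in (0:ℝ)..y, g u) / y := by
  rcases hy.lt_or_gt with h | h
  · have h1 : (∫ u in y..(0:ℝ), f u) ≤ ∫ u in y..(0:ℝ), g u := by
      apply integral_mono_on h.le hf.symm hg.symm
      intro x hx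
      exact hle x (by rwa [uIcc_of_ge h.le])
    rw [intervalIntegral.integral_symm (0:ℝ) y, intervalIntegral.integral_symm (0:ℝ) y] at h1
    rw [div_le_div_right_of_neg h]
    linarith
  · have h1 : (∫ u in (0:ℝ)..y, f u) ≤ ∫ u in (0:ℝ)..y, g u := by
      apply integral_mono_on h.le hf hg
      intro x hx
      exact hle x (by rwa [uIcc_of_le h.le])
    gcongr

theorem stmt17 (φ : ℝ → ℝ → ℝ)
    (hC2 : ContDiffOn ℝ 2 (fun p : ℝ × ℝ => φ p.1 p.2) (univ ×ˢ Ici 0))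
    (hpos : ∀ y z : ℝ, 0 ≤ z → 0 < φ y z)
    (hmono : ∀ y z : ℝ, 0 ≤ z → 0 ≤ deriv (φ y) z)
    (hbdd : ∃ C : ℝ, ∀ y z : ℝ, 0 ≤ z → deriv (φ y) z ≤ C)
    (gs : ℕ → ℝ → ℝ)
    (hgs0 : ∀ y : ℝ, gs 0 y = ∫ u in (0 : ℝ)..y, φ u 0)
    (hgsS : ∀ (n : ℕ) (y : ℝ), gs (n + 1) y = ∫ u in (0 : ℝ)..y, φ u (u / gs n u)) :
    ∀ (n : ℕ) (y : ℝ), y ≠ 0 →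
      0 < gs 0 y / y ∧ gs 0 y / y ≤ gs (2 * n) y / y ∧
      gs (2 * n) y / y ≤ gs (2 * n + 2) y / y ∧
      gs (2 * n + 2) y / y ≤ gs (2 * n + 3) y / y ∧
      gs (2 * n + 3) y / y ≤ gs (2 * n + 1) y / y := by
  have hcont : ContinuousOn (fun p : ℝ × ℝ => φ p.1 p.2) (univ ×ˢ Ici 0) := hC2.continuousOn
  have hψ : Continuous (fun p : ℝ × ℝ => φ p.1 (max p.2 0)) := by
    have := hcont.comp_continuous
      (f := fun p : ℝ × ℝ => (p.1, max p.2 0))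
      (continuous_fst.prodMk (continuous_snd.max continuous_const))
      (fun p => ⟨mem_univ _, mem_Ici.2 (le_max_right _ _)⟩)
    exact this
  have hφ0cont : Continuous (fun u : ℝ => φ u 0) := by
    have := hψ.comp ((continuous_id.prodMk (continuous_const : Continuous fun _ : ℝ => (0:ℝ))))
    simp only [Function.comp_def] at this
    simpa using this
  have hmon : ∀ y : ℝ, MonotoneOn (φ y) (Ici 0) := by
    intro y
    apply monotoneOn_of_deriv_nonneg (convex_Ici 0)
    · exact hcont.comp (Continuous.continuousOn (continuous_const.prodMk continuous_id))
        (fun z hz => ⟨mem_univ _, hz⟩)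
    · have h2 : ContDiffOn ℝ 2 (φ y) (Ici 0) :=
        hC2.comp ((contDiff_const.prodMk contDiff_id).contDiffOn) (fun z hz => ⟨mem_univ _, hz⟩)
      rw [interior_Ici]
      exact (h2.differentiableOn (by norm_num)).mono Ioi_subset_Ici_self
    · rw [interior_Ici]
      exact fun z hz => hmono y z hz.le
  have int0 : ∀ a b : ℝ, IntervalIntegrable (fun u => φ u 0) volume a b :=
    fun a b => hφ0cont.intervalIntegrable a b
  have hgs0cont : Continuous (gs 0) := by
    rw [funext hgs0]
    exact intervalIntegral.continuous_primitive (fun a b => int0 a b) 0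
  have ratio0_pos : ∀ y : ℝ, y ≠ 0 → 0 < gs 0 y / y := by
    intro y hy
    rcases hy.lt_or_gt with h | h
    · have h1 : 0 < ∫ u in y..(0:ℝ), φ u 0 :=
        intervalIntegral_pos_of_pos (int0 y 0) (fun x => hpos x 0 le_rfl) h
      have h2 : gs 0 y < 0 := by
        rw [hgs0, intervalIntegral.integral_symm y (0:ℝ)]
        linarith
      exact div_pos_of_neg_of_neg h2 h
    · have h1 : 0 < ∫ u in (0:ℝ)..y, φ u 0 :=
        intervalIntegral_pos_of_pos (int0 0 y) (fun x => hpos x 0 le_rfl) h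
      exact div_pos (by rwa [hgs0]) h
  -- nonnegativity of u / gs n u given the ratio bound
  have hnnf : ∀ n : ℕ, (∀ y : ℝ, y ≠ 0 → gs 0 y / y ≤ gs n y / y) →
      ∀ u : ℝ, 0 ≤ u / gs n u := by
    intro n hrn u
    rcases eq_or_ne u 0 with rfl | hu0
    · simp
    · have h0 : 0 < gs n u / u := lt_of_lt_of_le (ratio0_pos u hu0) (hrn u hu0)
      rw [show u / gs n u = (gs n u / u)⁻¹ from (inv_div _ _).symm]
      exact (inv_pos.2 h0).le
  -- integrability step
  have intstep : ∀ n : ℕ, Continuous (gs n) →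
      (∀ y : ℝ, y ≠ 0 → gs 0 y / y ≤ gs n y / y) →
      ∀ y : ℝ, IntervalIntegrable (fun u => φ u (u / gs n u)) volume 0 y := by
    intro n hcn hrn y
    obtain ⟨u₀, hu₀, hminOn⟩ := isCompact_uIcc.exists_isMinOn (nonempty_uIcc)
      (hφ0cont.continuousOn (s := uIcc (0:ℝ) y))
    set m := φ u₀ 0 with hmdef
    have hm0 : 0 < m := hpos u₀ 0 le_rfl
    have hmle : ∀ u ∈ uIcc (0:ℝ) y, u ≠ 0 → m ≤ gs 0 u / u := by
      intro u hu hu0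
      have hsub : uIcc (0:ℝ) u ⊆ uIcc (0:ℝ) y := uIcc_subset_uIcc left_mem_uIcc hu
      have h1 : (∫ _t in (0:ℝ)..u, m) / u ≤ (∫ t in (0:ℝ)..u, φ t 0) / u := by
        apply ratio_mono_aux hu0 intervalIntegrable_const (int0 0 u)
        intro t ht
        exact hminOn (hsub ht)
      rw [intervalIntegral.integral_const, sub_zero, smul_eq_mul,
        mul_div_cancel_left₀ _ hu0] at h1
      rwa [hgs0]
    have hub : ∀ u ∈ uIcc (0:ℝ) y, u / gs n u ∈ Icc (0:ℝ) m⁻¹ := by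
      intro u hu
      refine ⟨hnnf n hrn u, ?_⟩
      rcases eq_or_ne u 0 with rfl | hu0
      · simp [inv_nonneg.2 hm0.le]
      · have h2 : m ≤ gs n u / u := le_trans (hmle u hu hu0) (hrn u hu0)
        rw [show u / gs n u = (gs n u / u)⁻¹ from (inv_div _ _).symm]
        exact inv_anti₀ hm0 h2
    obtain ⟨C, hC⟩ := (isCompact_uIcc.prod isCompact_Icc).exists_bound_of_continuousOn
      (s := uIcc (0:ℝ) y ×ˢ Icc (0:ℝ) m⁻¹) hψ.continuousOn
    have hfeq : (fun u => φ u (u / gs n u)) = fun u => φ u (max (u / gs n u) 0) := by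
      funext u; rw [max_eq_left (hnnf n hrn u)]
    have hmeas : AEStronglyMeasurable (fun u => φ u (u / gs n u))
        (volume : Measure ℝ) := by
      rw [hfeq]
      have hin : Measurable fun u : ℝ => (u, u / gs n u) :=
        measurable_id.prodMk (measurable_id.div hcn.measurable)
      exact ((hψ.measurable.comp hin)).aestronglyMeasurable
    rw [intervalIntegrable_iff]
    refine Measure.integrableOn_of_bounded (M := C) ?_ hmeas ?_
    · rw [Set.uIoc]
      exact measure_Ioc_lt_top.ne
    · apply ae_restrict_of_forall_mem measurableSet_uIoc
      intro x hx
      have hx' : x ∈ uIcc (0:ℝ) y := uIoc_subset_uIcc hx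
      have := hC (x, x / gs n x) ⟨hx', hub x hx'⟩
      simpa [max_eq_left (hnnf n hrn x)] using this
  -- main induction invariant
  have key : ∀ n : ℕ, Continuous (gs n) ∧ (∀ y : ℝ, y ≠ 0 → gs 0 y / y ≤ gs n y / y) := by
    intro n
    induction n with
    | zero => exact ⟨hgs0cont, fun y _ => le_rfl⟩
    | succ k ih =>
      have intk : ∀ y : ℝ, IntervalIntegrable (fun u => φ u (u / gs k u)) volume 0 y :=
        intstep k ih.1 ih.2
      have hck : Continuous (gs (k+1)) := by
        rw [funext (hgsS k)]
        exact intervalIntegral.continuous_primitive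
          (fun a b => ((intk a).symm.trans (intk b))) 0
      refine ⟨hck, ?_⟩
      intro y hy
      rw [hgs0, hgsS]
      apply ratio_mono_aux hy (int0 0 y) (intk y)
      intro u _
      exact hmon u (self_mem_Ici) (hnnf k ih.2 u) (hnnf k ih.2 u)
  have intn : ∀ (n : ℕ) (y : ℝ), IntervalIntegrable (fun u => φ u (u / gs n u)) volume 0 y :=
    fun n y => intstep n (key n).1 (key n).2 y
  -- the antitone operator step
  have M : ∀ a b : ℕ, (∀ y : ℝ, y ≠ 0 → gs a y / y ≤ gs b y / y) →
      ∀ y : ℝ, y ≠ 0 → gs (b+1) y / y ≤ gs (a+1) y / y := by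
    intro a b hab y hy
    rw [hgsS, hgsS]
    apply ratio_mono_aux hy (intn b y) (intn a y)
    intro u _
    rcases eq_or_ne u 0 with rfl | hu0
    · simp
    · have ha0 : 0 < gs a u / u := lt_of_lt_of_le (ratio0_pos u hu0) ((key a).2 u hu0)
      have h1 : u / gs b u ≤ u / gs a u := by
        rw [show u / gs b u = (gs b u / u)⁻¹ from (inv_div _ _).symm,
            show u / gs a u = (gs a u / u)⁻¹ from (inv_div _ _).symm]
        exact inv_anti₀ ha0 (hab u hu0)
      exact hmon u (hnnf b (key b).2 u) (hnnf a (key a).2 u) h1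
  -- seeds
  have h21 : ∀ y : ℝ, y ≠ 0 → gs 2 y / y ≤ gs 1 y / y := by
    have := M 0 1 (key 1).2
    simpa using this
  have h23 : ∀ y : ℝ, y ≠ 0 → gs 2 y / y ≤ gs 3 y / y := by
    have := M 2 1 h21
    simpa using this
  have h31 : ∀ y : ℝ, y ≠ 0 → gs 3 y / y ≤ gs 1 y / y := by
    have := M 0 2 (key 2).2
    simpa using this
  -- bracketing chain
  have C : ∀ n : ℕ,
      (∀ y : ℝ, y ≠ 0 → gs (2*n) y / y ≤ gs (2*n+2) y / y) ∧
      (∀ y : ℝ, y ≠ 0 → gs (2*n+2) y / y ≤ gs (2*n+3) y / y) ∧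
      (∀ y : ℝ, y ≠ 0 → gs (2*n+3) y / y ≤ gs (2*n+1) y / y) := by
    intro n
    induction n with
    | zero =>
      refine ⟨?_, ?_, ?_⟩
      · simpa using (key 2).2
      · simpa using h23
      · simpa using h31
    | succ k ih =>
      obtain ⟨h1, h2, h3⟩ := ih
      have e1 : ∀ y : ℝ, y ≠ 0 → gs (2*k+2) y / y ≤ gs (2*k+4) y / y := by
        have := M (2*k+3) (2*k+1) h3
        intro y hy; have := this y hy
        convert this using 3 <;> omega
      have e2 : ∀ y : ℝ, y ≠ 0 → gs (2*k+4) y / y ≤ gs (2*k+3) y / y := by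
        have := M (2*k+2) (2*k+3) h2
        intro y hy; have := this y hy
        convert this using 3 <;> omega
      have e3 : ∀ y : ℝ, y ≠ 0 → gs (2*k+4) y / y ≤ gs (2*k+5) y / y := by
        have := M (2*k+4) (2*k+3) e2
        intro y hy; have := this y hy
        convert this using 3 <;> omega
      have e4 : ∀ y : ℝ, y ≠ 0 → gs (2*k+5) y / y ≤ gs (2*k+3) y / y := by
        have := M (2*k+2) (2*k+4) e1
        intro y hy; have := this y hy
        convert this using 3 <;> omega
      refine ⟨?_, ?_, ?_⟩
      · intro y hy; have := e1 y hy; convert this using 3 <;> omega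
      · intro y hy; have := e3 y hy; convert this using 3 <;> omega
      · intro y hy; have := e4 y hy; convert this using 3 <;> omega
  have D : ∀ n : ℕ, ∀ y : ℝ, y ≠ 0 → gs 0 y / y ≤ gs (2*n) y / y := by
    intro n
    induction n with
    | zero => intro y hy; simp
    | succ k ih =>
      intro y hy
      have := le_trans (ih y hy) ((C k).1 y hy)
      rw [show 2 * (k + 1) = 2 * k + 2 by ring]; exact this
  intro n y hy
  exact ⟨ratio0_pos y hy, D n y hy, (C n).1 y hy, (C n).2.1 y hy, (C n).2.2 y hy⟩
end

section
/- Under the hypotheses of the existence lemma, the limits g_e(y) = lim g_{2n}(y) and g_o(y) = lim g_{2n+1}(y) of the even and odd Picard iterates exist, satisfy g_e = Φ[g_o] and g_o = Φ[g_e], and lim_{y→0} g_e(y)/y = lim_{y→0} g_o(y)/y = 1. -/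
open Set Filter Topology MeasureTheory

namespace S18

variable {φ : ℝ → ℝ → ℝ}

lemma phiContAt (hC2 : ContDiffOn ℝ 2 (fun p : ℝ × ℝ => φ p.1 p.2) (univ ×ˢ Ici 0))
    {y z : ℝ} (hz : 0 < z) : ContinuousAt (fun p : ℝ × ℝ => φ p.1 p.2) (y, z) :=
  hC2.continuousOn.continuousAt (prod_mem_nhds univ_mem (Ici_mem_nhds hz))

lemma phiContY (hC2 : ContDiffOn ℝ 2 (fun p : ℝ × ℝ => φ p.1 p.2) (univ ×ˢ Ici 0))
    {z : ℝ} (hz : 0 ≤ z) : Continuous (fun y => φ y z) := by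
  rw [← continuousOn_univ]
  exact hC2.continuousOn.comp ((continuous_id.prodMk continuous_const).continuousOn)
    (fun x _ => ⟨mem_univ _, hz⟩)

lemma phiContZ (hC2 : ContDiffOn ℝ 2 (fun p : ℝ × ℝ => φ p.1 p.2) (univ ×ˢ Ici 0))
    (y : ℝ) : ContinuousOn (φ y) (Ici 0) :=
  hC2.continuousOn.comp ((continuous_const.prodMk continuous_id).continuousOn)
    (fun x hx => ⟨mem_univ _, hx⟩)

lemma phiMonoZ (hC2 : ContDiffOn ℝ 2 (fun p : ℝ × ℝ => φ p.1 p.2) (univ ×ˢ Ici 0))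
    (hmono : ∀ y z : ℝ, 0 ≤ z → 0 ≤ deriv (φ y) z)
    (y : ℝ) : MonotoneOn (φ y) (Ici 0) := by
  have hcd : ContDiffOn ℝ 2 (φ y) (Ici 0) :=
    hC2.comp ((contDiff_const.prodMk contDiff_id).contDiffOn) (fun x hx => ⟨mem_univ _, hx⟩)
  refine monotoneOn_of_deriv_nonneg (convex_Ici 0) (phiContZ hC2 y) ?_ ?_
  · rw [interior_Ici]
    exact (hcd.differentiableOn (by norm_num)).mono Ioi_subset_Ici_self
  · rw [interior_Ici]
    exact fun x hx => hmono y x (le_of_lt hx)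

variable {φ : ℝ → ℝ → ℝ} {gs : ℕ → ℝ → ℝ}

lemma gs_zero (hgs0 : ∀ y : ℝ, gs 0 y = ∫ u in (0 : ℝ)..y, φ u 0)
    (hgsS : ∀ (n : ℕ) (y : ℝ), gs (n + 1) y = ∫ u in (0 : ℝ)..y, φ u (u / gs n u)) :
    ∀ n, gs n 0 = 0 := by
  intro n
  cases n with
  | zero => rw [hgs0, intervalIntegral.integral_same]
  | succ m => rw [hgsS, intervalIntegral.integral_same]

lemma g0_lb (hC2 : ContDiffOn ℝ 2 (fun p : ℝ × ℝ => φ p.1 p.2) (univ ×ˢ Ici 0))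
    (hpos : ∀ y z : ℝ, 0 ≤ z → 0 < φ y z)
    (hgs0 : ∀ y : ℝ, gs 0 y = ∫ u in (0 : ℝ)..y, φ u 0)
    {b : ℝ} (hb : 0 < b) :
    ∃ m : ℝ, 0 < m ∧ ∀ u ∈ Icc (0:ℝ) b, m * u ≤ gs 0 u := by
  have hcont : Continuous (fun y : ℝ => φ y 0) := phiContY hC2 le_rfl
  obtain ⟨x0, hx0, hmin⟩ := (isCompact_Icc (a := (0:ℝ)) (b := b)).exists_isMinOn
    (nonempty_Icc.2 hb.le) hcont.continuousOn
  refine ⟨φ x0 0, hpos x0 0 le_rfl, fun u hu => ?_⟩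
  have h1 : IntervalIntegrable (fun _ : ℝ => φ x0 0) volume 0 u := intervalIntegrable_const
  have h2 : IntervalIntegrable (fun t : ℝ => φ t 0) volume 0 u := hcont.intervalIntegrable 0 u
  have := intervalIntegral.integral_mono_on hu.1 h1 h2
    (fun x hx => hmin ⟨hx.1, hx.2.trans hu.2⟩)
  rw [intervalIntegral.integral_const] at this
  rw [hgs0]
  calc φ x0 0 * u = (u - 0) • φ x0 0 := by rw [sub_zero, smul_eq_mul, mul_comm]
    _ ≤ _ := this


variable {φ : ℝ → ℝ → ℝ} {gs : ℕ → ℝ → ℝ} {g h : ℝ → ℝ}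

lemma gs0_pos (hC2 : ContDiffOn ℝ 2 (fun p : ℝ × ℝ => φ p.1 p.2) (univ ×ˢ Ici 0))
    (hpos : ∀ y z : ℝ, 0 ≤ z → 0 < φ y z)
    (hgs0 : ∀ y : ℝ, gs 0 y = ∫ u in (0 : ℝ)..y, φ u 0)
    {u : ℝ} (hu : 0 < u) : 0 < gs 0 u := by
  obtain ⟨m, hm, hlb⟩ := g0_lb hC2 hpos hgs0 hu
  have := hlb u ⟨hu.le, le_rfl⟩
  nlinarith

lemma g_pos (hC2 : ContDiffOn ℝ 2 (fun p : ℝ × ℝ => φ p.1 p.2) (univ ×ˢ Ici 0))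
    (hpos : ∀ y z : ℝ, 0 ≤ z → 0 < φ y z)
    (hgs0 : ∀ y : ℝ, gs 0 y = ∫ u in (0 : ℝ)..y, φ u 0)
    (hglb : ∀ u : ℝ, 0 < u → gs 0 u ≤ g u) {u : ℝ} (hu : 0 < u) : 0 < g u :=
  (gs0_pos hC2 hpos hgs0 hu).trans_le (hglb u hu)

lemma ratio_nonneg (hC2 : ContDiffOn ℝ 2 (fun p : ℝ × ℝ => φ p.1 p.2) (univ ×ˢ Ici 0))
    (hpos : ∀ y z : ℝ, 0 ≤ z → 0 < φ y z)
    (hgs0 : ∀ y : ℝ, gs 0 y = ∫ u in (0 : ℝ)..y, φ u 0)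
    (hglb : ∀ u : ℝ, 0 < u → gs 0 u ≤ g u) {u : ℝ} (hu : 0 ≤ u) : 0 ≤ u / g u := by
  rcases eq_or_lt_of_le hu with rfl | hu'
  · simp
  · exact div_nonneg hu'.le (g_pos hC2 hpos hgs0 hglb hu').le

lemma integrand_contOn (hC2 : ContDiffOn ℝ 2 (fun p : ℝ × ℝ => φ p.1 p.2) (univ ×ˢ Ici 0))
    (hpos : ∀ y z : ℝ, 0 ≤ z → 0 < φ y z)
    (hgs0 : ∀ y : ℝ, gs 0 y = ∫ u in (0 : ℝ)..y, φ u 0)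
    (hgc : ContinuousOn g (Ici 0)) (hglb : ∀ u : ℝ, 0 < u → gs 0 u ≤ g u) :
    ContinuousOn (fun u => φ u (u / g u)) (Ioi 0) := by
  have hr : ContinuousOn (fun u : ℝ => (u, u / g u)) (Ioi 0) := by
    apply continuousOn_id.prodMk
    exact continuousOn_id.div (hgc.mono Ioi_subset_Ici_self)
      (fun u hu => (g_pos hC2 hpos hgs0 hglb hu).ne')
  exact hC2.continuousOn.comp hr
    (fun u hu => ⟨mem_univ _, ratio_nonneg hC2 hpos hgs0 hglb (le_of_lt hu)⟩)

lemma integrand_bound (hC2 : ContDiffOn ℝ 2 (fun p : ℝ × ℝ => φ p.1 p.2) (univ ×ˢ Ici 0))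
    (hpos : ∀ y z : ℝ, 0 ≤ z → 0 < φ y z)
    (hmono : ∀ y z : ℝ, 0 ≤ z → 0 ≤ deriv (φ y) z)
    (hgs0 : ∀ y : ℝ, gs 0 y = ∫ u in (0 : ℝ)..y, φ u 0)
    (hglb : ∀ u : ℝ, 0 < u → gs 0 u ≤ g u) {b : ℝ} (hb : 0 < b) :
    ∃ M : ℝ, 0 < M ∧ ∀ u ∈ Ioc (0:ℝ) b, φ u (u / g u) ≤ M := by
  obtain ⟨m, hm, hlb⟩ := g0_lb hC2 hpos hgs0 hb
  -- u / g u ≤ 1/m on Ioc 0 b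
  have hub : ∀ u ∈ Ioc (0:ℝ) b, u / g u ≤ 1 / m := by
    intro u hu
    have hgu : 0 < g u := g_pos hC2 hpos hgs0 hglb hu.1
    rw [div_le_div_iff₀ hgu hm]
    have h1 : m * u ≤ gs 0 u := hlb u ⟨hu.1.le, hu.2⟩
    have h2 : gs 0 u ≤ g u := hglb u hu.1
    nlinarith
  obtain ⟨x0, hx0, hmax⟩ := (isCompact_Icc (a := (0:ℝ)) (b := b)).exists_isMaxOn
    (nonempty_Icc.2 hb.le) (phiContY hC2 (by positivity : (0:ℝ) ≤ 1/m)).continuousOn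
  refine ⟨φ x0 (1/m), hpos _ _ (by positivity), fun u hu => ?_⟩
  have h1 : φ u (u / g u) ≤ φ u (1/m) := by
    apply phiMonoZ hC2 hmono u (ratio_nonneg hC2 hpos hgs0 hglb hu.1.le)
      (by positivity : (0:ℝ) ≤ 1/m) (hub u hu)
  exact h1.trans (hmax ⟨hu.1.le, hu.2⟩)

lemma integrand_intOn (hC2 : ContDiffOn ℝ 2 (fun p : ℝ × ℝ => φ p.1 p.2) (univ ×ˢ Ici 0))
    (hpos : ∀ y z : ℝ, 0 ≤ z → 0 < φ y z)
    (hmono : ∀ y z : ℝ, 0 ≤ z → 0 ≤ deriv (φ y) z)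
    (hgs0 : ∀ y : ℝ, gs 0 y = ∫ u in (0 : ℝ)..y, φ u 0)
    (hgc : ContinuousOn g (Ici 0)) (hglb : ∀ u : ℝ, 0 < u → gs 0 u ≤ g u)
    {b : ℝ} (hb : 0 ≤ b) :
    IntegrableOn (fun u => φ u (u / g u)) (Ioc 0 b) := by
  rcases eq_or_lt_of_le hb with rfl | hb'
  · simp
  obtain ⟨M, hM, hMb⟩ := integrand_bound hC2 hpos hmono hgs0 hglb hb'
  have hmeas : AEStronglyMeasurable (fun u => φ u (u / g u)) (volume.restrict (Ioc 0 b)) :=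
    ((integrand_contOn hC2 hpos hgs0 hgc hglb).mono Ioc_subset_Ioi_self).aestronglyMeasurable
      measurableSet_Ioc
  refine Integrable.mono' (g := fun _ => M) (integrableOn_const measure_Ioc_lt_top.ne) hmeas ?_
  rw [ae_restrict_iff' measurableSet_Ioc]
  filter_upwards with u hu
  rw [Real.norm_eq_abs, abs_of_pos (hpos _ _ (ratio_nonneg hC2 hpos hgs0 hglb hu.1.le))]
  exact hMb u hu

lemma integrand_intervalInt (hC2 : ContDiffOn ℝ 2 (fun p : ℝ × ℝ => φ p.1 p.2) (univ ×ˢ Ici 0))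
    (hpos : ∀ y z : ℝ, 0 ≤ z → 0 < φ y z)
    (hmono : ∀ y z : ℝ, 0 ≤ z → 0 ≤ deriv (φ y) z)
    (hgs0 : ∀ y : ℝ, gs 0 y = ∫ u in (0 : ℝ)..y, φ u 0)
    (hgc : ContinuousOn g (Ici 0)) (hglb : ∀ u : ℝ, 0 < u → gs 0 u ≤ g u)
    {b : ℝ} (hb : 0 ≤ b) :
    IntervalIntegrable (fun u => φ u (u / g u)) volume 0 b :=
  (intervalIntegrable_iff_integrableOn_Ioc_of_le hb).2
    (integrand_intOn hC2 hpos hmono hgs0 hgc hglb hb)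

lemma primitive_contOn {f : ℝ → ℝ}
    (hint : ∀ b : ℝ, 0 ≤ b → IntegrableOn f (Ioc 0 b)) :
    ContinuousOn (fun y => ∫ u in (0:ℝ)..y, f u) (Ici 0) := by
  intro y hy
  have hb : (0:ℝ) ≤ y + 1 := by simp at hy ⊢; linarith
  have h1 : IntegrableOn f (Icc 0 (y+1)) := by
    rw [integrableOn_Icc_iff_integrableOn_Ioc]
    exact hint _ hb
  have h2 : ContinuousOn (fun x => ∫ t in Ioc (0:ℝ) x, f t) (Icc 0 (y+1)) :=
    intervalIntegral.continuousOn_primitive h1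
  have h3 : ContinuousOn (fun y => ∫ u in (0:ℝ)..y, f u) (Icc 0 (y+1)) := by
    apply h2.congr
    intro x hx
    simp only
    rw [intervalIntegral.integral_of_le hx.1]
  have h4 : ContinuousWithinAt (fun y => ∫ u in (0:ℝ)..y, f u) (Icc 0 (y+1)) y :=
    h3 y ⟨hy, by linarith⟩
  have : 𝓝[Ici (0:ℝ)] y ≤ 𝓝[Icc (0:ℝ) (y+1)] y := by
    rw [nhdsWithin_restrict' (s := Ici (0:ℝ)) (t := Iio (y+1)) (Iio_mem_nhds (by linarith))]
    exact nhdsWithin_mono _ (fun x hx => ⟨hx.1, hx.2.le⟩)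
  exact h4.mono_left this


lemma integral_lower (hC2 : ContDiffOn ℝ 2 (fun p : ℝ × ℝ => φ p.1 p.2) (univ ×ˢ Ici 0))
    (hpos : ∀ y z : ℝ, 0 ≤ z → 0 < φ y z)
    (hmono : ∀ y z : ℝ, 0 ≤ z → 0 ≤ deriv (φ y) z)
    (hgs0 : ∀ y : ℝ, gs 0 y = ∫ u in (0 : ℝ)..y, φ u 0)
    (hgc : ContinuousOn g (Ici 0)) (hglb : ∀ u : ℝ, 0 < u → gs 0 u ≤ g u)
    {y : ℝ} (hy : 0 ≤ y) :
    gs 0 y ≤ ∫ u in (0:ℝ)..y, φ u (u / g u) := by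
  rw [hgs0]
  apply intervalIntegral.integral_mono_on hy
    ((phiContY hC2 le_rfl).intervalIntegrable 0 y)
    (integrand_intervalInt hC2 hpos hmono hgs0 hgc hglb hy)
  intro x hx
  rcases eq_or_lt_of_le hx.1 with rfl | hx'
  · simp
  · exact phiMonoZ hC2 hmono x (mem_Ici.2 le_rfl) (ratio_nonneg hC2 hpos hgs0 hglb hx'.le)
      (ratio_nonneg hC2 hpos hgs0 hglb hx'.le)

lemma integral_compare (hC2 : ContDiffOn ℝ 2 (fun p : ℝ × ℝ => φ p.1 p.2) (univ ×ˢ Ici 0))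
    (hpos : ∀ y z : ℝ, 0 ≤ z → 0 < φ y z)
    (hmono : ∀ y z : ℝ, 0 ≤ z → 0 ≤ deriv (φ y) z)
    (hgs0 : ∀ y : ℝ, gs 0 y = ∫ u in (0 : ℝ)..y, φ u 0)
    (hgc : ContinuousOn g (Ici 0)) (hglb : ∀ u : ℝ, 0 < u → gs 0 u ≤ g u)
    (hhc : ContinuousOn h (Ici 0)) (hhlb : ∀ u : ℝ, 0 < u → gs 0 u ≤ h u)
    (hle : ∀ u : ℝ, 0 < u → g u ≤ h u) {y : ℝ} (hy : 0 ≤ y) :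
    ∫ u in (0:ℝ)..y, φ u (u / h u) ≤ ∫ u in (0:ℝ)..y, φ u (u / g u) := by
  apply intervalIntegral.integral_mono_on hy
    (integrand_intervalInt hC2 hpos hmono hgs0 hhc hhlb hy)
    (integrand_intervalInt hC2 hpos hmono hgs0 hgc hglb hy)
  intro x hx
  rcases eq_or_lt_of_le hx.1 with rfl | hx'
  · simp
  · have hgp := g_pos hC2 hpos hgs0 hglb hx'
    have hratio : x / h x ≤ x / g x :=
      div_le_div_of_nonneg_left hx'.le hgp (hle x hx')
    exact phiMonoZ hC2 hmono x (ratio_nonneg hC2 hpos hgs0 hhlb hx'.le)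
      (ratio_nonneg hC2 hpos hgs0 hglb hx'.le) hratio

lemma pack (hC2 : ContDiffOn ℝ 2 (fun p : ℝ × ℝ => φ p.1 p.2) (univ ×ˢ Ici 0))
    (hpos : ∀ y z : ℝ, 0 ≤ z → 0 < φ y z)
    (hmono : ∀ y z : ℝ, 0 ≤ z → 0 ≤ deriv (φ y) z)
    (hgs0 : ∀ y : ℝ, gs 0 y = ∫ u in (0 : ℝ)..y, φ u 0)
    (hgsS : ∀ (n : ℕ) (y : ℝ), gs (n + 1) y = ∫ u in (0 : ℝ)..y, φ u (u / gs n u)) :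
    ∀ n, ContinuousOn (gs n) (Ici 0) ∧ ∀ u : ℝ, 0 < u → gs 0 u ≤ gs n u := by
  intro n
  induction n with
  | zero =>
    refine ⟨?_, fun u _ => le_rfl⟩
    have hcont : Continuous (fun y : ℝ => ∫ u in (0:ℝ)..y, φ u 0) :=
      intervalIntegral.continuous_primitive
        (fun a b => (phiContY hC2 le_rfl).intervalIntegrable a b) 0
    have : gs 0 = fun y : ℝ => ∫ u in (0:ℝ)..y, φ u 0 := funext hgs0
    rw [this]
    exact hcont.continuousOn
  | succ n ih =>
    refine ⟨?_, fun u hu => ?_⟩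
    · have hcont := primitive_contOn (f := fun u => φ u (u / gs n u))
        (fun b hb => integrand_intOn hC2 hpos hmono hgs0 ih.1 ih.2 hb)
      exact hcont.congr (fun y _ => hgsS n y)
    · rw [hgsS]
      exact integral_lower hC2 hpos hmono hgs0 ih.1 ih.2 hu.le

lemma comp_step (hC2 : ContDiffOn ℝ 2 (fun p : ℝ × ℝ => φ p.1 p.2) (univ ×ˢ Ici 0))
    (hpos : ∀ y z : ℝ, 0 ≤ z → 0 < φ y z)
    (hmono : ∀ y z : ℝ, 0 ≤ z → 0 ≤ deriv (φ y) z)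
    (hgs0 : ∀ y : ℝ, gs 0 y = ∫ u in (0 : ℝ)..y, φ u 0)
    (hgsS : ∀ (n : ℕ) (y : ℝ), gs (n + 1) y = ∫ u in (0 : ℝ)..y, φ u (u / gs n u))
    {a b : ℕ} (hab : ∀ u : ℝ, 0 < u → gs a u ≤ gs b u) :
    ∀ u : ℝ, 0 < u → gs (b+1) u ≤ gs (a+1) u := by
  intro y hy
  rw [hgsS, hgsS]
  exact integral_compare hC2 hpos hmono hgs0
    (pack hC2 hpos hmono hgs0 hgsS a).1 (pack hC2 hpos hmono hgs0 hgsS a).2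
    (pack hC2 hpos hmono hgs0 hgsS b).1 (pack hC2 hpos hmono hgs0 hgsS b).2
    hab hy.le
lemma interleave (hC2 : ContDiffOn ℝ 2 (fun p : ℝ × ℝ => φ p.1 p.2) (univ ×ˢ Ici 0))
    (hpos : ∀ y z : ℝ, 0 ≤ z → 0 < φ y z)
    (hmono : ∀ y z : ℝ, 0 ≤ z → 0 ≤ deriv (φ y) z)
    (hgs0 : ∀ y : ℝ, gs 0 y = ∫ u in (0 : ℝ)..y, φ u 0)
    (hgsS : ∀ (n : ℕ) (y : ℝ), gs (n + 1) y = ∫ u in (0 : ℝ)..y, φ u (u / gs n u)) :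
    ∀ n : ℕ,
      (∀ u : ℝ, 0 < u → gs (2*n) u ≤ gs (2*n+1) u) ∧
      (∀ u : ℝ, 0 < u → gs (2*n) u ≤ gs (2*n+2) u) ∧
      (∀ u : ℝ, 0 < u → gs (2*n+3) u ≤ gs (2*n+1) u) ∧
      (∀ u : ℝ, 0 < u → gs (2*n+2) u ≤ gs (2*n+1) u) := by
  intro n
  induction n with
  | zero =>
    have h01 : ∀ u : ℝ, 0 < u → gs 0 u ≤ gs 1 u := (pack hC2 hpos hmono hgs0 hgsS 1).2
    have h02 : ∀ u : ℝ, 0 < u → gs 0 u ≤ gs 2 u := (pack hC2 hpos hmono hgs0 hgsS 2).2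
    have h21 : ∀ u : ℝ, 0 < u → gs 2 u ≤ gs 1 u := comp_step hC2 hpos hmono hgs0 hgsS h01
    have h31 : ∀ u : ℝ, 0 < u → gs 3 u ≤ gs 1 u := comp_step hC2 hpos hmono hgs0 hgsS h02
    exact ⟨h01, h02, h31, h21⟩
  | succ n ih =>
    obtain ⟨h1, h2, h3, h4⟩ := ih
    have n1 : ∀ u : ℝ, 0 < u → gs (2*n+2) u ≤ gs (2*n+3) u :=
      comp_step hC2 hpos hmono hgs0 hgsS h4
    have n2 : ∀ u : ℝ, 0 < u → gs (2*n+2) u ≤ gs (2*n+4) u :=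
      comp_step hC2 hpos hmono hgs0 hgsS h3
    have n3 : ∀ u : ℝ, 0 < u → gs (2*n+5) u ≤ gs (2*n+3) u :=
      comp_step hC2 hpos hmono hgs0 hgsS n2
    have n4 : ∀ u : ℝ, 0 < u → gs (2*n+4) u ≤ gs (2*n+3) u :=
      comp_step hC2 hpos hmono hgs0 hgsS n1
    refine ⟨?_, ?_, ?_, ?_⟩ <;> [exact (by omega : 2*(n+1)+1 = 2*n+3) ▸ (by omega : 2*(n+1) = 2*n+2) ▸ n1;
      exact (by omega : 2*(n+1)+2 = 2*n+4) ▸ (by omega : 2*(n+1) = 2*n+2) ▸ n2;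
      exact (by omega : 2*(n+1)+3 = 2*n+5) ▸ (by omega : 2*(n+1)+1 = 2*n+3) ▸ n3;
      exact (by omega : 2*(n+1)+2 = 2*n+4) ▸ (by omega : 2*(n+1)+1 = 2*n+3) ▸ n4]

lemma even_mono (hC2 : ContDiffOn ℝ 2 (fun p : ℝ × ℝ => φ p.1 p.2) (univ ×ˢ Ici 0))
    (hpos : ∀ y z : ℝ, 0 ≤ z → 0 < φ y z)
    (hmono : ∀ y z : ℝ, 0 ≤ z → 0 ≤ deriv (φ y) z)
    (hgs0 : ∀ y : ℝ, gs 0 y = ∫ u in (0 : ℝ)..y, φ u 0)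
    (hgsS : ∀ (n : ℕ) (y : ℝ), gs (n + 1) y = ∫ u in (0 : ℝ)..y, φ u (u / gs n u))
    {y : ℝ} (hy : 0 ≤ y) : Monotone (fun n => gs (2*n) y) := by
  apply monotone_nat_of_le_succ
  intro n
  rcases eq_or_lt_of_le hy with rfl | hy'
  · rw [gs_zero hgs0 hgsS, gs_zero hgs0 hgsS]
  · have := (interleave hC2 hpos hmono hgs0 hgsS n).2.1 y hy'
    have e : 2*(n+1) = 2*n+2 := by ring
    rw [e]; exact this

lemma odd_anti (hC2 : ContDiffOn ℝ 2 (fun p : ℝ × ℝ => φ p.1 p.2) (univ ×ˢ Ici 0))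
    (hpos : ∀ y z : ℝ, 0 ≤ z → 0 < φ y z)
    (hmono : ∀ y z : ℝ, 0 ≤ z → 0 ≤ deriv (φ y) z)
    (hgs0 : ∀ y : ℝ, gs 0 y = ∫ u in (0 : ℝ)..y, φ u 0)
    (hgsS : ∀ (n : ℕ) (y : ℝ), gs (n + 1) y = ∫ u in (0 : ℝ)..y, φ u (u / gs n u))
    {y : ℝ} (hy : 0 ≤ y) : Antitone (fun n => gs (2*n+1) y) := by
  apply antitone_nat_of_succ_le
  intro n
  rcases eq_or_lt_of_le hy with rfl | hy'
  · rw [gs_zero hgs0 hgsS, gs_zero hgs0 hgsS]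
  · have := (interleave hC2 hpos hmono hgs0 hgsS n).2.2.1 y hy'
    have e : 2*(n+1)+1 = 2*n+3 := by ring
    rw [e]; exact this

lemma even_le_odd (hC2 : ContDiffOn ℝ 2 (fun p : ℝ × ℝ => φ p.1 p.2) (univ ×ˢ Ici 0))
    (hpos : ∀ y z : ℝ, 0 ≤ z → 0 < φ y z)
    (hmono : ∀ y z : ℝ, 0 ≤ z → 0 ≤ deriv (φ y) z)
    (hgs0 : ∀ y : ℝ, gs 0 y = ∫ u in (0 : ℝ)..y, φ u 0)
    (hgsS : ∀ (n : ℕ) (y : ℝ), gs (n + 1) y = ∫ u in (0 : ℝ)..y, φ u (u / gs n u))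
    {y : ℝ} (hy : 0 ≤ y) (n m : ℕ) : gs (2*n) y ≤ gs (2*m+1) y := by
  rcases eq_or_lt_of_le hy with rfl | hy'
  · rw [gs_zero hgs0 hgsS, gs_zero hgs0 hgsS]
  rcases le_total n m with hnm | hmn
  · exact (even_mono hC2 hpos hmono hgs0 hgsS hy hnm).trans
      ((interleave hC2 hpos hmono hgs0 hgsS m).1 y hy')
  · exact ((interleave hC2 hpos hmono hgs0 hgsS n).1 y hy').trans
      (odd_anti hC2 hpos hmono hgs0 hgsS hy hmn)
lemma integrand_bound_uniform (hC2 : ContDiffOn ℝ 2 (fun p : ℝ × ℝ => φ p.1 p.2) (univ ×ˢ Ici 0))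
    (hpos : ∀ y z : ℝ, 0 ≤ z → 0 < φ y z)
    (hmono : ∀ y z : ℝ, 0 ≤ z → 0 ≤ deriv (φ y) z)
    (hgs0 : ∀ y : ℝ, gs 0 y = ∫ u in (0 : ℝ)..y, φ u 0)
    {b : ℝ} (hb : 0 < b) :
    ∃ M : ℝ, 0 < M ∧ ∀ g : ℝ → ℝ, (∀ u : ℝ, 0 < u → gs 0 u ≤ g u) →
      ∀ u ∈ Ioc (0:ℝ) b, φ u (u / g u) ≤ M := by
  obtain ⟨m, hm, hlb⟩ := g0_lb hC2 hpos hgs0 hb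
  obtain ⟨x0, hx0, hmax⟩ := (isCompact_Icc (a := (0:ℝ)) (b := b)).exists_isMaxOn
    (nonempty_Icc.2 hb.le) (phiContY hC2 (by positivity : (0:ℝ) ≤ 1/m)).continuousOn
  refine ⟨φ x0 (1/m), hpos _ _ (by positivity), fun g hglb u hu => ?_⟩
  have hgu : 0 < g u := g_pos hC2 hpos hgs0 hglb hu.1
  have hub : u / g u ≤ 1 / m := by
    rw [div_le_div_iff₀ hgu hm]
    have h1 : m * u ≤ gs 0 u := hlb u ⟨hu.1.le, hu.2⟩
    have h2 : gs 0 u ≤ g u := hglb u hu.1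
    nlinarith
  have h1 : φ u (u / g u) ≤ φ u (1/m) :=
    phiMonoZ hC2 hmono u (ratio_nonneg hC2 hpos hgs0 hglb hu.1.le)
      (by positivity : (0:ℝ) ≤ 1/m) hub
  exact h1.trans (hmax ⟨hu.1.le, hu.2⟩)

lemma avg_tendsto {f : ℝ → ℝ} {L : ℝ}
    (hInt : ∀ b : ℝ, 0 < b → IntervalIntegrable f volume 0 b)
    (hlim : Tendsto f (𝓝[>] (0:ℝ)) (𝓝 L)) :
    Tendsto (fun y => (∫ u in (0:ℝ)..y, f u) / y) (𝓝[>] (0:ℝ)) (𝓝 L) := by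
  rw [Metric.tendsto_nhds]
  intro ε hε
  have hev : ∀ᶠ u in 𝓝[>] (0:ℝ), |f u - L| < ε/2 := by
    have := Metric.tendsto_nhds.1 hlim (ε/2) (by positivity)
    simpa [Real.dist_eq] using this
  rw [eventually_nhdsWithin_iff, Metric.eventually_nhds_iff] at hev
  obtain ⟨δ, hδpos, hδ⟩ := hev
  filter_upwards [Ioo_mem_nhdsGT_of_mem (⟨le_rfl, hδpos⟩ : (0:ℝ) ∈ Ico 0 δ)] with y hy
  have hy0 : (0:ℝ) < y := hy.1
  have key : |(∫ u in (0:ℝ)..y, f u) - L * y| ≤ (ε/2) * y := by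
    have heq : (∫ u in (0:ℝ)..y, f u) - L * y = ∫ u in (0:ℝ)..y, (f u - L) := by
      rw [intervalIntegral.integral_sub (hInt y hy0) intervalIntegrable_const,
        intervalIntegral.integral_const]
      simp [smul_eq_mul]
      ring
    rw [heq]
    have hb : ∀ x ∈ Set.uIoc (0:ℝ) y, ‖f x - L‖ ≤ ε/2 := by
      intro x hx
      rw [Set.uIoc_of_le hy0.le] at hx
      have hd : dist x 0 < δ := by
        rw [Real.dist_eq, sub_zero, abs_of_pos hx.1]
        exact lt_of_le_of_lt hx.2 hy.2
      exact (le_of_lt (hδ hd hx.1))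
    have := intervalIntegral.norm_integral_le_of_norm_le_const hb
    rwa [Real.norm_eq_abs, sub_zero, abs_of_pos hy0] at this
  rw [Real.dist_eq]
  have heq2 : (∫ u in (0:ℝ)..y, f u) / y - L = ((∫ u in (0:ℝ)..y, f u) - L * y) / y := by
    field_simp
  rw [heq2, abs_div, abs_of_pos hy0]
  have h3 : |(∫ u in (0:ℝ)..y, f u) - L * y| / y ≤ (ε/2 * y) / y := by gcongr
  have h4 : (ε/2 * y) / y = ε/2 := by
    field_simp
  linarith
noncomputable def alf (φ : ℝ → ℝ → ℝ) : ℕ → ℝ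
  | 0 => φ 0 0
  | n + 1 => φ 0 (1 / alf φ n)

lemma alf_pos (hpos : ∀ y z : ℝ, 0 ≤ z → 0 < φ y z) : ∀ n, 0 < alf φ n := by
  intro n
  induction n with
  | zero => exact hpos 0 0 le_rfl
  | succ n ih => exact hpos 0 _ (by positivity)

lemma slope_tendsto (hC2 : ContDiffOn ℝ 2 (fun p : ℝ × ℝ => φ p.1 p.2) (univ ×ˢ Ici 0))
    (hpos : ∀ y z : ℝ, 0 ≤ z → 0 < φ y z)
    (hmono : ∀ y z : ℝ, 0 ≤ z → 0 ≤ deriv (φ y) z)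
    (hgs0 : ∀ y : ℝ, gs 0 y = ∫ u in (0 : ℝ)..y, φ u 0)
    (hgsS : ∀ (n : ℕ) (y : ℝ), gs (n + 1) y = ∫ u in (0 : ℝ)..y, φ u (u / gs n u)) :
    ∀ n, Tendsto (fun y => gs n y / y) (𝓝[>] (0:ℝ)) (𝓝 (alf φ n)) := by
  intro n
  induction n with
  | zero =>
    have h0 : Tendsto (fun y => (∫ u in (0:ℝ)..y, φ u 0) / y) (𝓝[>] (0:ℝ)) (𝓝 (alf φ 0)) := by
      apply avg_tendsto (fun b hb => (phiContY hC2 le_rfl).intervalIntegrable 0 b)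
      exact ((phiContY hC2 le_rfl).tendsto 0).mono_left nhdsWithin_le_nhds
    exact h0.congr (fun y => by rw [hgs0])
  | succ n ih =>
    have hane : alf φ n ≠ 0 := (alf_pos hpos n).ne'
    have h1 : Tendsto (fun u => u / gs n u) (𝓝[>] (0:ℝ)) (𝓝 (1 / alf φ n)) := by
      have := (ih.inv₀ hane).congr (fun u => by rw [inv_div])
      simpa [one_div] using this
    have h2 : Tendsto (fun u : ℝ => ((u : ℝ), u / gs n u)) (𝓝[>] (0:ℝ))
        (𝓝 ((0:ℝ), 1 / alf φ n)) :=
      (tendsto_id.mono_left nhdsWithin_le_nhds).prodMk_nhds h1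
    have h3 : Tendsto (fun u => φ u (u / gs n u)) (𝓝[>] (0:ℝ)) (𝓝 (φ 0 (1 / alf φ n))) :=
      ((phiContAt hC2 (one_div_pos.2 (alf_pos hpos n))).tendsto.comp h2)
    have h4 := avg_tendsto (f := fun u => φ u (u / gs n u))
      (fun b hb => integrand_intervalInt hC2 hpos hmono hgs0
        (pack hC2 hpos hmono hgs0 hgsS n).1 (pack hC2 hpos hmono hgs0 hgsS n).2 hb.le) h3
    exact h4.congr (fun y => by rw [hgsS])

lemma alf_ge_a0 (hC2 : ContDiffOn ℝ 2 (fun p : ℝ × ℝ => φ p.1 p.2) (univ ×ˢ Ici 0))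
    (hpos : ∀ y z : ℝ, 0 ≤ z → 0 < φ y z)
    (hmono : ∀ y z : ℝ, 0 ≤ z → 0 ≤ deriv (φ y) z) :
    ∀ n, alf φ 0 ≤ alf φ n := by
  intro n
  cases n with
  | zero => exact le_rfl
  | succ n =>
    have h1 : (0:ℝ) ≤ 1 / alf φ n := (one_div_pos.2 (alf_pos hpos n)).le
    show φ 0 0 ≤ φ 0 (1 / alf φ n)
    exact phiMonoZ hC2 hmono 0 (mem_Ici.2 le_rfl) h1 h1

lemma FF_anti (hC2 : ContDiffOn ℝ 2 (fun p : ℝ × ℝ => φ p.1 p.2) (univ ×ˢ Ici 0))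
    (hmono : ∀ y z : ℝ, 0 ≤ z → 0 ≤ deriv (φ y) z)
    {a b : ℝ} (ha : 0 < a) (hab : a ≤ b) : φ 0 (1/b) ≤ φ 0 (1/a) := by
  have hb : 0 < b := ha.trans_le hab
  exact phiMonoZ hC2 hmono 0 (one_div_pos.2 hb).le (one_div_pos.2 ha).le
    (one_div_le_one_div_of_le ha hab)

lemma alf_le_a1 (hC2 : ContDiffOn ℝ 2 (fun p : ℝ × ℝ => φ p.1 p.2) (univ ×ˢ Ici 0))
    (hpos : ∀ y z : ℝ, 0 ≤ z → 0 < φ y z)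
    (hmono : ∀ y z : ℝ, 0 ≤ z → 0 ≤ deriv (φ y) z) :
    ∀ n, alf φ (n+1) ≤ alf φ 1 :=
  fun n => FF_anti hC2 hmono (alf_pos hpos 0) (alf_ge_a0 hC2 hpos hmono n)

lemma alf_bdd (hC2 : ContDiffOn ℝ 2 (fun p : ℝ × ℝ => φ p.1 p.2) (univ ×ˢ Ici 0))
    (hpos : ∀ y z : ℝ, 0 ≤ z → 0 < φ y z)
    (hmono : ∀ y z : ℝ, 0 ≤ z → 0 ≤ deriv (φ y) z) :
    ∀ n, alf φ n ≤ max (alf φ 0) (alf φ 1) := by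
  intro n
  cases n with
  | zero => exact le_max_left _ _
  | succ n => exact (alf_le_a1 hC2 hpos hmono n).trans (le_max_right _ _)

lemma alf_interleave (hC2 : ContDiffOn ℝ 2 (fun p : ℝ × ℝ => φ p.1 p.2) (univ ×ˢ Ici 0))
    (hpos : ∀ y z : ℝ, 0 ≤ z → 0 < φ y z)
    (hmono : ∀ y z : ℝ, 0 ≤ z → 0 ≤ deriv (φ y) z) :
    ∀ n : ℕ, alf φ (2*n) ≤ alf φ (2*n+2) ∧ alf φ (2*n+3) ≤ alf φ (2*n+1) := by
  intro n
  induction n with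
  | zero =>
    refine ⟨alf_ge_a0 hC2 hpos hmono 2, ?_⟩
    show φ 0 (1 / alf φ 2) ≤ φ 0 (1 / alf φ 0)
    exact FF_anti hC2 hmono (alf_pos hpos 0) (alf_ge_a0 hC2 hpos hmono 2)
  | succ n ih =>
    have s2 : alf φ (2*n+2) ≤ alf φ (2*n+4) := by
      show φ 0 (1 / alf φ (2*n+1)) ≤ φ 0 (1 / alf φ (2*n+3))
      exact FF_anti hC2 hmono (alf_pos hpos _) ih.2
    have s3 : alf φ (2*n+5) ≤ alf φ (2*n+3) := by
      show φ 0 (1 / alf φ (2*n+4)) ≤ φ 0 (1 / alf φ (2*n+2))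
      exact FF_anti hC2 hmono (alf_pos hpos _) s2
    refine ⟨?_, ?_⟩
    · exact (by omega : 2*(n+1)+2 = 2*n+4) ▸ (by omega : 2*(n+1) = 2*n+2) ▸ s2
    · exact (by omega : 2*(n+1)+3 = 2*n+5) ▸ (by omega : 2*(n+1)+1 = 2*n+3) ▸ s3

lemma alf_tendsto_one (hC2 : ContDiffOn ℝ 2 (fun p : ℝ × ℝ => φ p.1 p.2) (univ ×ˢ Ici 0))
    (hpos : ∀ y z : ℝ, 0 ≤ z → 0 < φ y z)
    (hmono : ∀ y z : ℝ, 0 ≤ z → 0 ≤ deriv (φ y) z)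
    (hnorm : φ 0 1 = 1)
    (hfix : ∀ α : ℝ, α > 0 → α = φ 0 (1 / φ 0 (1 / α)) → α = 1) :
    Tendsto (fun n => alf φ (2*n)) atTop (𝓝 1) ∧
    Tendsto (fun n => alf φ (2*n+1)) atTop (𝓝 1) := by
  have hmonoE : Monotone (fun n => alf φ (2*n)) := by
    apply monotone_nat_of_le_succ
    intro n
    have := (alf_interleave hC2 hpos hmono n).1
    exact (by omega : 2*(n+1) = 2*n+2) ▸ this
  have hantiO : Antitone (fun n => alf φ (2*n+1)) := by
    apply antitone_nat_of_succ_le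
    intro n
    have := (alf_interleave hC2 hpos hmono n).2
    exact (by omega : 2*(n+1)+1 = 2*n+3) ▸ this
  have hbddE : BddAbove (range fun n => alf φ (2*n)) := by
    refine ⟨max (alf φ 0) (alf φ 1), ?_⟩
    rintro x ⟨n, rfl⟩
    exact alf_bdd hC2 hpos hmono (2*n)
  have hbddO : BddBelow (range fun n => alf φ (2*n+1)) := by
    refine ⟨alf φ 0, ?_⟩
    rintro x ⟨n, rfl⟩
    exact alf_ge_a0 hC2 hpos hmono (2*n+1)
  set β := ⨆ n, alf φ (2*n) with hβ
  set γ := ⨅ n, alf φ (2*n+1) with hγ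
  have hE : Tendsto (fun n => alf φ (2*n)) atTop (𝓝 β) := tendsto_atTop_ciSup hmonoE hbddE
  have hO : Tendsto (fun n => alf φ (2*n+1)) atTop (𝓝 γ) := tendsto_atTop_ciInf hantiO hbddO
  have hβpos : 0 < β :=
    lt_of_lt_of_le (alf_pos hpos 0) (le_ciSup hbddE 0)
  have hγpos : 0 < γ := lt_of_lt_of_le (alf_pos hpos 0)
    (le_ciInf fun n => alf_ge_a0 hC2 hpos hmono (2*n+1))
  have hFc : ∀ x : ℝ, 0 < x → ContinuousAt (fun a : ℝ => φ 0 (1/a)) x := by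
    intro x hx
    have h1 : ContinuousAt (fun a : ℝ => ((0:ℝ), 1/a)) x :=
      continuousAt_const.prodMk (continuousAt_const.div continuousAt_id hx.ne')
    have h2 : Tendsto ((fun p : ℝ × ℝ => φ p.1 p.2) ∘ (fun a : ℝ => ((0:ℝ), 1/a)))
        (𝓝 x) (𝓝 (φ 0 (1/x))) :=
      Filter.Tendsto.comp (phiContAt (y := 0) (z := 1/x) hC2 (one_div_pos.2 hx)) h1
    exact h2
  have h5 : Tendsto (fun n => alf φ (2*n+1)) atTop (𝓝 (φ 0 (1/β))) :=
    (hFc β hβpos).tendsto.comp hE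
  have hγβ : γ = φ 0 (1/β) := tendsto_nhds_unique hO h5
  have h6 : Tendsto (fun n => alf φ (2*n+2)) atTop (𝓝 (φ 0 (1/γ))) :=
    (hFc γ hγpos).tendsto.comp hO
  have h7 : Tendsto (fun n => alf φ (2*n+2)) atTop (𝓝 β) :=
    (Filter.tendsto_add_atTop_iff_nat (f := fun n => alf φ (2*n)) 1).2 hE
  have hβγ : β = φ 0 (1/γ) := tendsto_nhds_unique h7 h6
  rw [hγβ] at hβγ
  have hβ1 : β = 1 := hfix β hβpos hβγ
  have hγ1 : γ = 1 := by
    rw [hγβ, hβ1]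
    simpa using hnorm
  exact ⟨hβ1 ▸ hE, hγ1 ▸ hO⟩
lemma keyP (hC2 : ContDiffOn ℝ 2 (fun p : ℝ × ℝ => φ p.1 p.2) (univ ×ˢ Ici 0))
    (hpos : ∀ y z : ℝ, 0 ≤ z → 0 < φ y z)
    (hmono : ∀ y z : ℝ, 0 ≤ z → 0 ≤ deriv (φ y) z)
    (hnorm : φ 0 1 = 1)
    (hfix : ∀ α : ℝ, α > 0 → α = φ 0 (1 / φ 0 (1 / α)) → α = 1)
    (hgs0 : ∀ y : ℝ, gs 0 y = ∫ u in (0 : ℝ)..y, φ u 0)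
    (hgsS : ∀ (n : ℕ) (y : ℝ), gs (n + 1) y = ∫ u in (0 : ℝ)..y, φ u (u / gs n u)) :
    ∃ ge go : ℝ → ℝ,
      (∀ y : ℝ, 0 ≤ y → Tendsto (fun n => gs (2*n) y) atTop (𝓝 (ge y))) ∧
      (∀ y : ℝ, 0 ≤ y → Tendsto (fun n => gs (2*n+1) y) atTop (𝓝 (go y))) ∧
      (∀ y : ℝ, 0 ≤ y → ge y = ∫ u in (0:ℝ)..y, φ u (u / go u)) ∧
      (∀ y : ℝ, 0 ≤ y → go y = ∫ u in (0:ℝ)..y, φ u (u / ge u)) ∧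
      Tendsto (fun y => ge y / y) (𝓝[>] (0:ℝ)) (𝓝 1) ∧
      Tendsto (fun y => go y / y) (𝓝[>] (0:ℝ)) (𝓝 1) := by
  have hP := pack hC2 hpos hmono hgs0 hgsS
  have hELO : ∀ y : ℝ, 0 ≤ y → ∀ n m : ℕ, gs (2*n) y ≤ gs (2*m+1) y :=
    fun y hy n m => even_le_odd hC2 hpos hmono hgs0 hgsS hy n m
  have hz := gs_zero hgs0 hgsS
  -- lower bound for all indices, all y ≥ 0
  have hlb_all : ∀ k : ℕ, ∀ y : ℝ, 0 ≤ y → gs 0 y ≤ gs k y := by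
    intro k y hy
    rcases eq_or_lt_of_le hy with rfl | hy'
    · rw [hz, hz]
    · exact (hP k).2 y hy'
  set ge : ℝ → ℝ := fun y => ⨆ n, gs (2*n) y with hge_def
  set go : ℝ → ℝ := fun y => ⨅ n, gs (2*n+1) y with hgo_def
  have hbddA : ∀ y : ℝ, 0 ≤ y → BddAbove (range fun n => gs (2*n) y) := by
    intro y hy
    refine ⟨gs 1 y, ?_⟩
    rintro x ⟨n, rfl⟩
    exact hELO y hy n 0
  have hbddB : ∀ y : ℝ, 0 ≤ y → BddBelow (range fun n => gs (2*n+1) y) := by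
    intro y hy
    refine ⟨gs 0 y, ?_⟩
    rintro x ⟨n, rfl⟩
    exact hlb_all (2*n+1) y hy
  have hconvE : ∀ y : ℝ, 0 ≤ y → Tendsto (fun n => gs (2*n) y) atTop (𝓝 (ge y)) :=
    fun y hy => tendsto_atTop_ciSup (even_mono hC2 hpos hmono hgs0 hgsS hy) (hbddA y hy)
  have hconvO : ∀ y : ℝ, 0 ≤ y → Tendsto (fun n => gs (2*n+1) y) atTop (𝓝 (go y)) :=
    fun y hy => tendsto_atTop_ciInf (odd_anti hC2 hpos hmono hgs0 hgsS hy) (hbddB y hy)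
  have hge0 : ge 0 = 0 := by
    have h1 : (fun n : ℕ => gs (2*n) (0:ℝ)) = fun _ => (0:ℝ) := funext fun n => hz (2*n)
    rw [hge_def]
    simp only [h1, ciSup_const]
  have hgo0 : go 0 = 0 := by
    have h1 : (fun n : ℕ => gs (2*n+1) (0:ℝ)) = fun _ => (0:ℝ) := funext fun n => hz (2*n+1)
    rw [hgo_def]
    simp only [h1, ciInf_const]
  have hgelb : ∀ y : ℝ, 0 ≤ y → ∀ n, gs (2*n) y ≤ ge y :=
    fun y hy n => le_ciSup (hbddA y hy) n
  have hgeub : ∀ y : ℝ, 0 ≤ y → ∀ m, ge y ≤ gs (2*m+1) y :=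
    fun y hy m => ciSup_le (fun n => hELO y hy n m)
  have hgolb : ∀ y : ℝ, 0 ≤ y → ∀ n, gs (2*n) y ≤ go y :=
    fun y hy n => le_ciInf (fun m => hELO y hy n m)
  have hgoub : ∀ y : ℝ, 0 ≤ y → ∀ n, go y ≤ gs (2*n+1) y :=
    fun y hy n => ciInf_le (hbddB y hy) n
  have hge_lb0 : ∀ u : ℝ, 0 < u → gs 0 u ≤ ge u := fun u hu => hgelb u hu.le 0
  have hgo_lb0 : ∀ u : ℝ, 0 < u → gs 0 u ≤ go u := fun u hu => hgolb u hu.le 0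
  have hge_pos : ∀ u : ℝ, 0 < u → 0 < ge u :=
    fun u hu => (gs0_pos hC2 hpos hgs0 hu).trans_le (hge_lb0 u hu)
  have hgo_pos : ∀ u : ℝ, 0 < u → 0 < go u :=
    fun u hu => (gs0_pos hC2 hpos hgs0 hu).trans_le (hgo_lb0 u hu)
  -- generic dominated convergence step
  have hDCT : ∀ (h : ℝ → ℝ) (σ : ℕ → ℕ), (∀ u : ℝ, 0 < u → gs 0 u ≤ h u) →
      (∀ u : ℝ, 0 < u → Tendsto (fun n => gs (σ n) u) atTop (𝓝 (h u))) →
      ∀ y : ℝ, 0 < y →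
      Tendsto (fun n => ∫ u in Ioc (0:ℝ) y, φ u (u / gs (σ n) u))
        atTop (𝓝 (∫ u in Ioc (0:ℝ) y, φ u (u / h u))) := by
    intro h σ hhlb hhconv y hy
    obtain ⟨M, hM, hMall⟩ := integrand_bound_uniform hC2 hpos hmono hgs0 hy
    apply MeasureTheory.tendsto_integral_of_dominated_convergence (bound := fun _ => M)
    · intro n
      exact ((integrand_contOn hC2 hpos hgs0 (hP (σ n)).1 (hP (σ n)).2).mono
        Ioc_subset_Ioi_self).aestronglyMeasurable measurableSet_Ioc
    · exact integrableOn_const measure_Ioc_lt_top.ne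
    · intro n
      rw [ae_restrict_iff' measurableSet_Ioc]
      filter_upwards with u hu
      rw [Real.norm_eq_abs, abs_of_pos (hpos _ _ (ratio_nonneg hC2 hpos hgs0 (hP (σ n)).2 hu.1.le))]
      exact hMall (gs (σ n)) (hP (σ n)).2 u hu
    · rw [ae_restrict_iff' measurableSet_Ioc]
      filter_upwards with u hu
      have hhu : 0 < h u := (gs0_pos hC2 hpos hgs0 hu.1).trans_le (hhlb u hu.1)
      have h1 : Tendsto (fun n => u / gs (σ n) u) atTop (𝓝 (u / h u)) :=
        Filter.Tendsto.div tendsto_const_nhds (hhconv u hu.1) hhu.ne'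
      have h2 : Tendsto (fun n => ((u:ℝ), u / gs (σ n) u)) atTop (𝓝 (u, u / h u)) :=
        Filter.Tendsto.prodMk_nhds tendsto_const_nhds h1
      have h3 : Tendsto ((fun p : ℝ × ℝ => φ p.1 p.2) ∘ (fun n => ((u:ℝ), u / gs (σ n) u)))
          atTop (𝓝 (φ u (u / h u))) :=
        Filter.Tendsto.comp (phiContAt (y := u) (z := u / h u) hC2 (div_pos hu.1 hhu)).tendsto h2
      exact h3
  -- integral equation for ge
  have hinteqE : ∀ y : ℝ, 0 ≤ y → ge y = ∫ u in (0:ℝ)..y, φ u (u / go u) := by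
    intro y hy
    rcases eq_or_lt_of_le hy with rfl | hy'
    · rw [intervalIntegral.integral_same, hge0]
    · have hd := hDCT go (fun n => 2*n+1) hgo_lb0
        (fun u hu => hconvO u hu.le) y hy'
      have hid : (fun n => ∫ u in Ioc (0:ℝ) y, φ u (u / gs (2*n+1) u))
          = fun n => gs (2*n+2) y := by
        funext n
        rw [hgsS (2*n+1) y, intervalIntegral.integral_of_le hy]
      rw [hid] at hd
      have hshift : Tendsto (fun n => gs (2*n+2) y) atTop (𝓝 (ge y)) :=
        (Filter.tendsto_add_atTop_iff_nat (f := fun n => gs (2*n) y) 1).2 (hconvE y hy)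
      rw [intervalIntegral.integral_of_le hy]
      exact tendsto_nhds_unique hshift hd
  have hinteqO : ∀ y : ℝ, 0 ≤ y → go y = ∫ u in (0:ℝ)..y, φ u (u / ge u) := by
    intro y hy
    rcases eq_or_lt_of_le hy with rfl | hy'
    · rw [intervalIntegral.integral_same, hgo0]
    · have hd := hDCT ge (fun n => 2*n) hge_lb0
        (fun u hu => hconvE u hu.le) y hy'
      have hid : (fun n => ∫ u in Ioc (0:ℝ) y, φ u (u / gs (2*n) u))
          = fun n => gs (2*n+1) y := by
        funext n
        rw [hgsS (2*n) y, intervalIntegral.integral_of_le hy]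
      rw [hid] at hd
      rw [intervalIntegral.integral_of_le hy]
      exact tendsto_nhds_unique (hconvO y hy) hd
  -- slopes
  have hslopes := slope_tendsto hC2 hpos hmono hgs0 hgsS
  obtain ⟨hAE, hAO⟩ := alf_tendsto_one hC2 hpos hmono hnorm hfix
  have hsqueeze : ∀ (h : ℝ → ℝ),
      (∀ y : ℝ, 0 < y → ∀ n : ℕ, gs (2*n) y ≤ h y ∧ h y ≤ gs (2*n+1) y) →
      Tendsto (fun y => h y / y) (𝓝[>] (0:ℝ)) (𝓝 1) := by
    intro h hbnd
    rw [Metric.tendsto_nhds]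
    intro ε hε
    have h1 : ∀ᶠ n in atTop, |alf φ (2*n) - 1| < ε/2 := by
      simpa [Real.dist_eq] using Metric.tendsto_nhds.1 hAE (ε/2) (by positivity)
    have h2 : ∀ᶠ n in atTop, |alf φ (2*n+1) - 1| < ε/2 := by
      simpa [Real.dist_eq] using Metric.tendsto_nhds.1 hAO (ε/2) (by positivity)
    obtain ⟨n, hn1, hn2⟩ := (h1.and h2).exists
    have g1 := Metric.tendsto_nhds.1 (hslopes (2*n)) (ε/2) (by positivity)
    have g2 := Metric.tendsto_nhds.1 (hslopes (2*n+1)) (ε/2) (by positivity)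
    filter_upwards [g1, g2, self_mem_nhdsWithin] with y hy1 hy2 hy
    have hy0 : (0:ℝ) < y := hy
    obtain ⟨lb, ub⟩ := hbnd y hy0 n
    have d1 : gs (2*n) y / y ≤ h y / y := by gcongr
    have d2 : h y / y ≤ gs (2*n+1) y / y := by gcongr
    rw [Real.dist_eq] at hy1 hy2 ⊢
    rw [abs_lt] at hy1 hy2 hn1 hn2 ⊢
    constructor <;> nlinarith [hy1.1, hy1.2, hy2.1, hy2.2, hn1.1, hn1.2, hn2.1, hn2.2]
  refine ⟨ge, go, hconvE, hconvO, hinteqE, hinteqO, ?_, ?_⟩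
  · exact hsqueeze ge (fun y hy n => ⟨hgelb y hy.le n, hgeub y hy.le n⟩)
  · exact hsqueeze go (fun y hy n => ⟨hgolb y hy.le n, hgoub y hy.le n⟩)
end S18

open S18 in
theorem stmt18 (φ : ℝ → ℝ → ℝ)
    (hC2 : ContDiffOn ℝ 2 (fun p : ℝ × ℝ => φ p.1 p.2) (univ ×ˢ Ici 0))
    (hpos : ∀ y z : ℝ, 0 ≤ z → 0 < φ y z)
    (hmono : ∀ y z : ℝ, 0 ≤ z → 0 ≤ deriv (φ y) z)
    (hbdd : ∃ C : ℝ, ∀ y z : ℝ, 0 ≤ z → deriv (φ y) z ≤ C)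
    (hnorm : φ 0 1 = 1)
    (hfix : ∀ α : ℝ, α > 0 → α = φ 0 (1 / φ 0 (1 / α)) → α = 1)
    (gs : ℕ → ℝ → ℝ)
    (hgs0 : ∀ y : ℝ, gs 0 y = ∫ u in (0 : ℝ)..y, φ u 0)
    (hgsS : ∀ (n : ℕ) (y : ℝ), gs (n + 1) y = ∫ u in (0 : ℝ)..y, φ u (u / gs n u)) :
    ∃ ge go : ℝ → ℝ,
      (∀ y : ℝ, Tendsto (fun n => gs (2 * n) y) atTop (𝓝 (ge y))) ∧
      (∀ y : ℝ, Tendsto (fun n => gs (2 * n + 1) y) atTop (𝓝 (go y))) ∧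
      (∀ y : ℝ, ge y = ∫ u in (0 : ℝ)..y, φ u (u / go u)) ∧
      (∀ y : ℝ, go y = ∫ u in (0 : ℝ)..y, φ u (u / ge u)) ∧
      Tendsto (fun y => ge y / y) (𝓝[≠] 0) (𝓝 1) ∧
      Tendsto (fun y => go y / y) (𝓝[≠] 0) (𝓝 1) := by
  classical
  -- mirrored data
  set φm : ℝ → ℝ → ℝ := fun x z => φ (-x) z with hφm_def
  set gm : ℕ → ℝ → ℝ := fun n y => -(gs n (-y)) with hgm_def
  have he0 : φm 0 = φ 0 := by
    funext z
    show φ (-0) z = φ 0 z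
    rw [neg_zero]
  have hC2m : ContDiffOn ℝ 2 (fun p : ℝ × ℝ => φm p.1 p.2) (univ ×ˢ Ici 0) := by
    have hinner : ContDiff ℝ 2 (fun p : ℝ × ℝ => ((-p.1 : ℝ), p.2)) :=
      (contDiff_fst.neg).prodMk contDiff_snd
    exact hC2.comp hinner.contDiffOn (fun p hp => ⟨mem_univ _, hp.2⟩)
  have hposm : ∀ y z : ℝ, 0 ≤ z → 0 < φm y z := fun y z hz => hpos (-y) z hz
  have hmonom : ∀ y z : ℝ, 0 ≤ z → 0 ≤ deriv (φm y) z := fun y z hz => hmono (-y) z hz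
  have hnormm : φm 0 1 = 1 := by rw [he0]; exact hnorm
  have hfixm : ∀ α : ℝ, α > 0 → α = φm 0 (1 / φm 0 (1 / α)) → α = 1 := by
    intro a ha h
    rw [he0] at h
    exact hfix a ha h
  have hgm0 : ∀ y : ℝ, gm 0 y = ∫ u in (0 : ℝ)..y, φm u 0 := by
    intro y
    have hcomp := intervalIntegral.integral_comp_neg (a := 0) (b := y) (fun x => φ x 0)
    rw [neg_zero] at hcomp
    calc gm 0 y = -(gs 0 (-y)) := rfl
      _ = -∫ u in (0:ℝ)..(-y), φ u 0 := by rw [hgs0]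
      _ = ∫ u in (-y)..(0:ℝ), φ u 0 := (intervalIntegral.integral_symm 0 (-y)).symm
      _ = ∫ u in (0:ℝ)..y, φ (-u) 0 := hcomp.symm
  have hgmS : ∀ (n : ℕ) (y : ℝ), gm (n + 1) y = ∫ u in (0 : ℝ)..y, φm u (u / gm n u) := by
    intro n y
    have hcomp := intervalIntegral.integral_comp_neg (a := 0) (b := y)
      (fun x => φ x (x / gs n x))
    rw [neg_zero] at hcomp
    have hfun : (fun u : ℝ => φm u (u / gm n u))
        = (fun u : ℝ => φ (-u) ((-u) / gs n (-u))) := by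
      funext u
      show φ (-u) (u / -(gs n (-u))) = φ (-u) ((-u) / gs n (-u))
      rw [div_neg, neg_div]
    calc gm (n+1) y = -(gs (n+1) (-y)) := rfl
      _ = -∫ u in (0:ℝ)..(-y), φ u (u / gs n u) := by rw [hgsS]
      _ = ∫ u in (-y)..(0:ℝ), φ u (u / gs n u) := (intervalIntegral.integral_symm 0 (-y)).symm
      _ = ∫ u in (0:ℝ)..y, φ (-u) ((-u) / gs n (-u)) := hcomp.symm
      _ = ∫ u in (0:ℝ)..y, φm u (u / gm n u) := by rw [hfun]
  obtain ⟨geP, goP, hconvEP, hconvOP, hinteqEP, hinteqOP, hslopeEP, hslopeOP⟩ :=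
    keyP (φ := φ) (gs := gs) hC2 hpos hmono hnorm hfix hgs0 hgsS
  obtain ⟨geN, goN, hconvEN, hconvON, hinteqEN, hinteqON, hslopeEN, hslopeON⟩ :=
    keyP (φ := φm) (gs := gm) hC2m hposm hmonom hnormm hfixm hgm0 hgmS
  set Ge : ℝ → ℝ := fun y => if 0 ≤ y then geP y else -geN (-y) with hGe_def
  set Go : ℝ → ℝ := fun y => if 0 ≤ y then goP y else -goN (-y) with hGo_def
  have hGe_pos : ∀ y : ℝ, 0 ≤ y → Ge y = geP y := fun y hy => if_pos hy
  have hGe_neg : ∀ y : ℝ, y < 0 → Ge y = -geN (-y) := fun y hy => if_neg (not_le.2 hy)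
  have hGo_pos : ∀ y : ℝ, 0 ≤ y → Go y = goP y := fun y hy => if_pos hy
  have hGo_neg : ∀ y : ℝ, y < 0 → Go y = -goN (-y) := fun y hy => if_neg (not_le.2 hy)
  have hmirror : ∀ (k : ℕ) (y : ℝ), gs k y = -(gm k (-y)) := by
    intro k y
    rw [hgm_def]
    simp
  refine ⟨Ge, Go, ?_, ?_, ?_, ?_, ?_, ?_⟩
  · -- even convergence
    intro y
    rcases le_or_gt 0 y with hy | hy
    · rw [hGe_pos y hy]; exact hconvEP y hy
    · rw [hGe_neg y hy]
      have h1 := (hconvEN (-y) (by linarith)).neg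
      exact h1.congr (fun n => (hmirror (2*n) y).symm)
  · intro y
    rcases le_or_gt 0 y with hy | hy
    · rw [hGo_pos y hy]; exact hconvOP y hy
    · rw [hGo_neg y hy]
      have h1 := (hconvON (-y) (by linarith)).neg
      exact h1.congr (fun n => (hmirror (2*n+1) y).symm)
  · -- integral equation for Ge
    intro y
    rcases le_or_gt 0 y with hy | hy
    · rw [hGe_pos y hy, hinteqEP y hy]
      apply intervalIntegral.integral_congr
      intro u hu
      rw [uIcc_of_le hy] at hu
      show φ u (u / goP u) = φ u (u / Go u)
      rw [hGo_pos u hu.1]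
    · rw [hGe_neg y hy]
      have hcomp := intervalIntegral.integral_comp_neg (a := 0) (b := -y)
        (fun u => φ u (u / Go u))
      rw [neg_neg, neg_zero] at hcomp
      -- hcomp : ∫ t in 0..(-y), φ (-t) ((-t) / Go (-t)) = ∫ u in y..0, φ u (u / Go u)
      have hEq : EqOn (fun t : ℝ => φm t (t / goN t))
          (fun t : ℝ => φ (-t) ((-t) / Go (-t))) (uIcc 0 (-y)) := by
        intro t ht
        rw [uIcc_of_le (by linarith : (0:ℝ) ≤ -y)] at ht
        rcases eq_or_lt_of_le ht.1 with rfl | ht'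
        · show φ (-0) (0 / goN 0) = φ (-0) ((-0) / Go (-0))
          rw [neg_zero, zero_div, zero_div]
        · show φ (-t) (t / goN t) = φ (-t) ((-t) / Go (-t))
          rw [hGo_neg (-t) (by linarith), neg_neg, div_neg, neg_div, neg_neg]
      calc -geN (-y) = -∫ t in (0:ℝ)..(-y), φm t (t / goN t) := by rw [hinteqEN (-y) (by linarith)]
        _ = -∫ t in (0:ℝ)..(-y), φ (-t) ((-t) / Go (-t)) := by
            rw [intervalIntegral.integral_congr hEq]
        _ = -∫ u in y..(0:ℝ), φ u (u / Go u) := by rw [hcomp]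
        _ = ∫ u in (0:ℝ)..y, φ u (u / Go u) := by
            rw [intervalIntegral.integral_symm y 0]
  · -- integral equation for Go
    intro y
    rcases le_or_gt 0 y with hy | hy
    · rw [hGo_pos y hy, hinteqOP y hy]
      apply intervalIntegral.integral_congr
      intro u hu
      rw [uIcc_of_le hy] at hu
      show φ u (u / geP u) = φ u (u / Ge u)
      rw [hGe_pos u hu.1]
    · rw [hGo_neg y hy]
      have hcomp := intervalIntegral.integral_comp_neg (a := 0) (b := -y)
        (fun u => φ u (u / Ge u))
      rw [neg_neg, neg_zero] at hcomp
      have hEq : EqOn (fun t : ℝ => φm t (t / geN t))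
          (fun t : ℝ => φ (-t) ((-t) / Ge (-t))) (uIcc 0 (-y)) := by
        intro t ht
        rw [uIcc_of_le (by linarith : (0:ℝ) ≤ -y)] at ht
        rcases eq_or_lt_of_le ht.1 with rfl | ht'
        · show φ (-0) (0 / geN 0) = φ (-0) ((-0) / Ge (-0))
          rw [neg_zero, zero_div, zero_div]
        · show φ (-t) (t / geN t) = φ (-t) ((-t) / Ge (-t))
          rw [hGe_neg (-t) (by linarith), neg_neg, div_neg, neg_div, neg_neg]
      calc -goN (-y) = -∫ t in (0:ℝ)..(-y), φm t (t / geN t) := by rw [hinteqON (-y) (by linarith)]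
        _ = -∫ t in (0:ℝ)..(-y), φ (-t) ((-t) / Ge (-t)) := by
            rw [intervalIntegral.integral_congr hEq]
        _ = -∫ u in y..(0:ℝ), φ u (u / Ge u) := by rw [hcomp]
        _ = ∫ u in (0:ℝ)..y, φ u (u / Ge u) := by
            rw [intervalIntegral.integral_symm y 0]
  · -- slope for Ge
    have hmap : Tendsto (fun y : ℝ => -y) (𝓝[<] (0:ℝ)) (𝓝[>] (0:ℝ)) := by
      apply tendsto_nhdsWithin_of_tendsto_nhds_of_eventually_within
      · have := (continuous_neg.tendsto (0:ℝ))
        rw [neg_zero] at this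
        exact this.mono_left nhdsWithin_le_nhds
      · filter_upwards [self_mem_nhdsWithin] with y hy
        simp only [mem_Iio] at hy
        exact mem_Ioi.2 (by linarith)
    have hP : Tendsto (fun y => Ge y / y) (𝓝[>] (0:ℝ)) (𝓝 1) := by
      apply hslopeEP.congr'
      filter_upwards [self_mem_nhdsWithin] with y hy
      rw [hGe_pos y (le_of_lt hy)]
    have hN : Tendsto (fun y => Ge y / y) (𝓝[<] (0:ℝ)) (𝓝 1) := by
      have h1 : Tendsto (fun y : ℝ => geN (-y) / (-y)) (𝓝[<] (0:ℝ)) (𝓝 1) :=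
        hslopeEN.comp hmap
      apply h1.congr'
      filter_upwards [self_mem_nhdsWithin] with y hy
      rw [hGe_neg y hy, div_neg, neg_div]
    have hsplit : 𝓝[≠] (0:ℝ) = 𝓝[<] (0:ℝ) ⊔ 𝓝[>] (0:ℝ) := by
      rw [← nhdsWithin_union, Iio_union_Ioi]
    rw [hsplit]
    exact tendsto_sup.2 ⟨hN, hP⟩
  · -- slope for Go
    have hmap : Tendsto (fun y : ℝ => -y) (𝓝[<] (0:ℝ)) (𝓝[>] (0:ℝ)) := by
      apply tendsto_nhdsWithin_of_tendsto_nhds_of_eventually_within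
      · have := (continuous_neg.tendsto (0:ℝ))
        rw [neg_zero] at this
        exact this.mono_left nhdsWithin_le_nhds
      · filter_upwards [self_mem_nhdsWithin] with y hy
        simp only [mem_Iio] at hy
        exact mem_Ioi.2 (by linarith)
    have hP : Tendsto (fun y => Go y / y) (𝓝[>] (0:ℝ)) (𝓝 1) := by
      apply hslopeOP.congr'
      filter_upwards [self_mem_nhdsWithin] with y hy
      rw [hGo_pos y (le_of_lt hy)]
    have hN : Tendsto (fun y => Go y / y) (𝓝[<] (0:ℝ)) (𝓝 1) := by
      have h1 : Tendsto (fun y : ℝ => goN (-y) / (-y)) (𝓝[<] (0:ℝ)) (𝓝 1) :=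
        hslopeON.comp hmap
      apply h1.congr'
      filter_upwards [self_mem_nhdsWithin] with y hy
      rw [hGo_neg y hy, div_neg, neg_div]
    have hsplit : 𝓝[≠] (0:ℝ) = 𝓝[<] (0:ℝ) ⊔ 𝓝[>] (0:ℝ) := by
      rw [← nhdsWithin_union, Iio_union_Ioi]
    rw [hsplit]
    exact tendsto_sup.2 ⟨hN, hP⟩
end

section
/- Let β = φ_y(0,1)/(1 + φ_z(0,1)/2) where φ satisfies the hypotheses of the existence lemma, and let g be the unique solution of g' = φ(y, y/g(y)), g(0)=0. Then sup_{0<|y|≤a} |g(y)/y − (1 + βy/2)| = O(a²) as a → 0. -/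
open Set Filter


/-- One iteration of the weighted estimate. -/
lemma step1 (A K : ℝ) (hA : 0 ≤ A) (hK : 0 ≤ K)
    (w : ℝ → ℝ) (a : ℝ) (ha : 0 < a)
    (hdiff : ∀ y ∈ Ioc (0:ℝ) a, DifferentiableAt ℝ w y)
    (hineq : ∀ y ∈ Ioc (0:ℝ) a, |y * deriv w y + (1+A) * w y| ≤ K * y^2 + ((1+A)/2) * |w y|)
    (Q : ℝ) (hQ : 0 ≤ Q) (hbd : ∀ y ∈ Ioc (0:ℝ) a, |w y| ≤ Q) :
    ∀ y ∈ Ioc (0:ℝ) a, |w y| ≤ K * y^2/(A+3) + Q/2 := by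
  intro y hy
  set F : ℝ → ℝ := fun t => t ^ (A+1) * w t with hF
  set B : ℝ → ℝ := fun t => K * t^(A+3)/(A+3) + (Q/2) * t^(A+1) with hBdef
  have hFderiv : ∀ t ∈ Ioc (0:ℝ) a, HasDerivAt F (t^A * (t * deriv w t + (1+A) * w t)) t := by
    intro t ht
    have h1 : HasDerivAt (fun t : ℝ => t ^ (A+1)) ((A+1) * t ^ A) t := by
      have := Real.hasDerivAt_rpow_const (x := t) (p := A+1) (Or.inl (ne_of_gt ht.1))
      simpa using this
    have h2 := (hdiff t ht).hasDerivAt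
    have := h1.mul h2
    refine this.congr_deriv ?_
    have ht1 : t ^ (A+1) = t ^ A * t := by
      rw [Real.rpow_add ht.1, Real.rpow_one]
    rw [ht1]; ring
  have hBderiv : ∀ t : ℝ, 0 < t → HasDerivAt B (K * t^(A+2) + ((A+1)/2) * Q * t^A) t := by
    intro t ht
    have h1 : HasDerivAt (fun t : ℝ => t ^ (A+3)) ((A+3) * t ^ (A+2)) t := by
      have := Real.hasDerivAt_rpow_const (x := t) (p := A+3) (Or.inl (ne_of_gt ht))
      convert this using 2; ring_nf
    have h2 : HasDerivAt (fun t : ℝ => t ^ (A+1)) ((A+1) * t ^ A) t := by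
      have := Real.hasDerivAt_rpow_const (x := t) (p := A+1) (Or.inl (ne_of_gt ht))
      simpa using this
    have := ((h1.const_mul K).div_const (A+3)).add (h2.const_mul (Q/2))
    refine this.congr_deriv ?_
    have hA3 : (A+3) ≠ 0 := by positivity
    field_simp
  have hpow2 : ∀ t : ℝ, 0 < t → t ^ (A+2) = t ^ A * t ^ (2:ℕ) := by
    intro t ht
    have h1 : t^(A+2) = t^A * t^(2:ℝ) := Real.rpow_add ht A 2
    have h2 : t^(2:ℝ) = t^(2:ℕ) := by
      rw [show (2:ℝ) = ((2:ℕ):ℝ) by norm_num, Real.rpow_natCast]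
    rw [h1, h2]
  have hbound : ∀ t ∈ Ioc (0:ℝ) a, |t^A * (t * deriv w t + (1+A) * w t)| ≤ K * t^(A+2) + ((A+1)/2) * Q * t^A := by
    intro t ht
    have htp : (0:ℝ) < t := ht.1
    have h0 : (0:ℝ) ≤ t ^ A := Real.rpow_nonneg htp.le A
    rw [abs_mul, abs_of_nonneg h0]
    have hi := hineq t ht
    calc t ^ A * |t * deriv w t + (1+A) * w t| ≤ t ^ A * (K * t^2 + ((1+A)/2) * |w t|) := by
          exact mul_le_mul_of_nonneg_left hi h0
      _ ≤ t ^ A * (K * t^2 + ((1+A)/2) * Q) := by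
          apply mul_le_mul_of_nonneg_left _ h0
          have := hbd t ht
          nlinarith [this]
      _ = K * t^(A+2) + ((A+1)/2) * Q * t^A := by
          rw [hpow2 t htp]; ring
  have hkey : ∀ ε ∈ Ioo (0:ℝ) y, |F y| ≤ B y + Q * ε^(A+1) := by
    intro ε hε
    have hIcc : Icc ε y ⊆ Ioc (0:ℝ) a := fun t htt => ⟨lt_of_lt_of_le hε.1 htt.1, le_trans htt.2 hy.2⟩
    have hcontF : ContinuousOn F (Icc ε y) := fun t ht => ((hFderiv t (hIcc ht)).continuousAt).continuousWithinAt
    have hcontB : ContinuousOn B (Icc ε y) := fun t ht => ((hBderiv t (hIcc ht).1).continuousAt).continuousWithinAt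
    have hint : interior (Icc ε y) = Ioo ε y := interior_Icc
    have mono : ∀ (s : ℝ), s = 1 ∨ s = -1 → (B ε + s * F ε ≤ B y + s * F y) := by
      intro s hs
      have habs : |s| = 1 := by rcases hs with h | h <;> simp [h]
      have hmono : MonotoneOn (fun t => B t + s * F t) (Icc ε y) := by
        apply monotoneOn_of_deriv_nonneg (convex_Icc ε y)
        · exact hcontB.add (continuousOn_const.mul hcontF)
        · intro t ht
          rw [hint] at ht
          have htm : t ∈ Ioc (0:ℝ) a := hIcc ⟨ht.1.le, ht.2.le⟩
          exact ((hBderiv t htm.1).add ((hFderiv t htm).const_mul s)).differentiableAt.differentiableWithinAt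
        · intro t ht
          rw [hint] at ht
          have htm : t ∈ Ioc (0:ℝ) a := hIcc ⟨ht.1.le, ht.2.le⟩
          rw [show deriv (fun t => B t + s * F t) t = _ from ((hBderiv t htm.1).add ((hFderiv t htm).const_mul s)).deriv]
          have hb := hbound t htm
          have h1 : |s * (t^A * (t * deriv w t + (1+A) * w t))| ≤ K * t^(A+2) + ((A+1)/2) * Q * t^A := by
            rw [abs_mul, habs, one_mul]; exact hb
          linarith [neg_abs_le (s * (t^A * (t * deriv w t + (1+A) * w t)))]
      have := hmono (left_mem_Icc.mpr hε.2.le) (right_mem_Icc.mpr hε.2.le) hε.2.le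
      simpa using this
    have hFε : |F ε| ≤ Q * ε^(A+1) := by
      have hεm : ε ∈ Ioc (0:ℝ) a := ⟨hε.1, le_trans hε.2.le hy.2⟩
      have h0 : (0:ℝ) ≤ ε ^ (A+1) := Real.rpow_nonneg hε.1.le _
      simp only [hF]
      rw [abs_mul, abs_of_nonneg h0]
      calc ε ^ (A+1) * |w ε| ≤ ε ^ (A+1) * Q := mul_le_mul_of_nonneg_left (hbd ε hεm) h0
        _ = Q * ε ^ (A+1) := mul_comm _ _
    have hBε : 0 ≤ B ε := by
      have h1 : (0:ℝ) ≤ ε ^ (A+3) := Real.rpow_nonneg hε.1.le _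
      have h2 : (0:ℝ) ≤ ε ^ (A+1) := Real.rpow_nonneg hε.1.le _
      have h3 : (0:ℝ) < A + 3 := by linarith
      simp only [hBdef]; positivity
    have h1 := mono 1 (Or.inl rfl)
    have h2 := mono (-1) (Or.inr rfl)
    rw [abs_le]
    constructor
    · nlinarith [h2, hFε, hBε, neg_abs_le (F ε), le_abs_self (F ε)]
    · nlinarith [h1, hFε, hBε, neg_abs_le (F ε), le_abs_self (F ε)]
  have hFy : |F y| ≤ B y := by
    have htend : Tendsto (fun ε : ℝ => B y + Q * ε^(A+1)) (nhdsWithin 0 (Ioo 0 y)) (nhds (B y + Q * (0:ℝ)^(A+1))) := by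
      apply Tendsto.mono_left _ nhdsWithin_le_nhds
      exact (tendsto_const_nhds.add (tendsto_const_nhds.mul
        ((Real.continuousAt_rpow_const 0 (A+1) (Or.inr (by linarith))).tendsto)))
    have h0 : (0:ℝ)^(A+1) = 0 := Real.zero_rpow (by positivity)
    rw [h0, mul_zero, add_zero] at htend
    have hne : (nhdsWithin (0:ℝ) (Ioo 0 y)).NeBot := by
      apply mem_closure_iff_nhdsWithin_neBot.mp
      rw [closure_Ioo (ne_of_lt hy.1)]
      exact ⟨le_refl 0, hy.1.le⟩
    exact ge_of_tendsto htend (eventually_nhdsWithin_of_forall hkey)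
  have hyp : (0:ℝ) < y := hy.1
  have hyA1 : (0:ℝ) < y ^ (A+1) := Real.rpow_pos_of_pos hyp _
  have hFval : |F y| = y^(A+1) * |w y| := by
    simp only [hF]
    rw [abs_mul, abs_of_nonneg hyA1.le]
  rw [hFval] at hFy
  have hdiv : |w y| ≤ B y / y^(A+1) := by
    rw [le_div_iff₀ hyA1]; linarith [hFy]
  refine le_trans hdiv ?_
  have hBy : B y / y^(A+1) = K * y^2/(A+3) + Q/2 := by
    simp only [hBdef]
    have h3 : y ^ (A+3) = y ^ (A+1) * y ^ (2:ℕ) := by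
      rw [show A+3 = (A+1)+2 by ring]
      have h1 : y^((A+1)+2) = y^(A+1) * y^(2:ℝ) := Real.rpow_add hyp _ 2
      have h2 : y^(2:ℝ) = y^(2:ℕ) := by
        rw [show (2:ℝ) = ((2:ℕ):ℝ) by norm_num, Real.rpow_natCast]
      rw [h1, h2]
    rw [h3]
    have hA3 : (A+3) ≠ 0 := by positivity
    have hyne : y ^ (A+1) ≠ 0 := ne_of_gt hyA1
    field_simp
  rw [hBy]

/-- iterated estimate -/
lemma keylemma (A K : ℝ) (hA : 0 ≤ A) (hK : 0 ≤ K)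
    (w : ℝ → ℝ) (δ : ℝ) (hδ : 0 < δ)
    (hdiff : ∀ y ∈ Ioc (0:ℝ) δ, DifferentiableAt ℝ w y)
    (hineq : ∀ y ∈ Ioc (0:ℝ) δ, |y * deriv w y + (1+A) * w y| ≤ K * y^2 + ((1+A)/2) * |w y|)
    (Q : ℝ) (hQ : 0 ≤ Q) (hbd : ∀ y ∈ Ioc (0:ℝ) δ, |w y| ≤ Q) :
    ∀ a ∈ Ioc (0:ℝ) δ, ∀ y ∈ Ioc (0:ℝ) a, |w y| ≤ 2 * K * a^2/(A+3) := by
  intro a ha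
  have hsub : Ioc (0:ℝ) a ⊆ Ioc (0:ℝ) δ := Ioc_subset_Ioc le_rfl ha.2
  have hdiff' := fun y hy => hdiff y (hsub hy)
  have hineq' := fun y hy => hineq y (hsub hy)
  have hbd' := fun y hy => hbd y (hsub hy)
  have hA3 : (0:ℝ) < A + 3 := by linarith
  have main : ∀ n : ℕ, ∀ y ∈ Ioc (0:ℝ) a, |w y| ≤ 2 * K * a^2/(A+3) + Q / 2^n := by
    intro n
    induction n with
    | zero =>
        intro y hy
        have h0 : 0 ≤ 2 * K * a^2/(A+3) := by positivity
        simpa using by linarith [hbd' y hy]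
    | succ n ih =>
        have hQ' : 0 ≤ 2 * K * a^2/(A+3) + Q / 2^n := by positivity
        have hstep := step1 A K hA hK w a ha.1 hdiff' hineq' _ hQ' ih
        intro y hy
        have h1 := hstep y hy
        have hy2 : K * y^2/(A+3) ≤ K * a^2/(A+3) := by
          gcongr
          · exact hy.1.le
          · exact hy.2
        have e : (2*K*a^2/(A+3) + Q/2^n)/2 = K*a^2/(A+3) + Q/2^(n+1) := by
          rw [pow_succ]
          field_simp
          ring
        rw [e] at h1
        have e2 : 2*K*a^2/(A+3) = K*a^2/(A+3) + K*a^2/(A+3) := by ring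
        linarith
  intro y hy
  have htend : Tendsto (fun n : ℕ => 2 * K * a^2/(A+3) + Q / 2^n) atTop (nhds (2 * K * a^2/(A+3) + 0)) := by
    apply tendsto_const_nhds.add
    have : Tendsto (fun n : ℕ => Q * (1/2:ℝ)^n) atTop (nhds (Q * 0)) :=
      tendsto_const_nhds.mul (tendsto_pow_atTop_nhds_zero_of_lt_one (by norm_num) (by norm_num))
    simpa [div_eq_mul_inv, inv_pow] using this
  rw [← add_zero (2 * K * a^2/(A+3))]
  exact ge_of_tendsto htend (Eventually.of_forall fun n => main n y hy)


lemma taylorBound (φ : ℝ → ℝ → ℝ)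
    (hC2 : ContDiffOn ℝ 2 (fun p : ℝ × ℝ => φ p.1 p.2) (univ ×ˢ Ici 0)) :
    ∃ r : ℝ, 0 < r ∧ ∃ K : ℝ, 0 ≤ K ∧ ∀ y z : ℝ, |y| ≤ r → |z - 1| ≤ r →
      |φ y z - φ 0 1 - (deriv (fun y => φ y 1) 0) * y - (deriv (φ 0) 1) * (z - 1)|
        ≤ K * (y^2 + (z-1)^2) := by
  set f : ℝ × ℝ → ℝ := fun p : ℝ × ℝ => φ p.1 p.2 with hfdef
  set p₀ : ℝ × ℝ := ((0:ℝ), (1:ℝ)) with hp₀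
  have hball : Metric.ball p₀ (1/2) ⊆ univ ×ˢ Ici 0 := by
    intro q hq
    refine ⟨mem_univ _, ?_⟩
    have h1 : |q.2 - 1| ≤ ‖q - p₀‖ := by
      have := norm_snd_le (q - p₀)
      simpa [hp₀, Real.norm_eq_abs] using this
    have h2 : ‖q - p₀‖ < 1/2 := by
      rw [← dist_eq_norm]; exact hq
    have : |q.2 - 1| < 1/2 := lt_of_le_of_lt h1 h2
    have := abs_lt.mp this
    simp only [mem_Ici]
    linarith [this.1]
  have hopen : IsOpen (Metric.ball p₀ (1/2:ℝ)) := Metric.isOpen_ball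
  have hCb : ContDiffOn ℝ 2 f (Metric.ball p₀ (1/2)) := hC2.mono hball
  -- differentiability with full fderiv on the ball
  have hdiff : ∀ q ∈ Metric.ball p₀ (1/2), HasFDerivAt f (fderiv ℝ f q) q := by
    intro q hq
    have : ContDiffAt ℝ 2 f q := hCb.contDiffAt (hopen.mem_nhds hq)
    exact (this.differentiableAt (by norm_num)).hasFDerivAt
  have hp₀ball : p₀ ∈ Metric.ball p₀ (1/2:ℝ) := Metric.mem_ball_self (by norm_num)
  -- Lipschitz of fderiv near p₀
  have hC2at : ContDiffAt ℝ 2 f p₀ := hCb.contDiffAt (hopen.mem_nhds hp₀ball)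
  have hC1d : ContDiffAt ℝ 1 (fderiv ℝ f) p₀ := hC2at.fderiv_right (by norm_num)
  obtain ⟨L, t, ht, hLip⟩ := hC1d.exists_lipschitzOnWith
  obtain ⟨r₁, hr₁, hball₁⟩ := Metric.nhds_basis_closedBall.mem_iff.mp ht
  set r : ℝ := min (r₁/2) (1/4) with hrdef
  have hrpos : 0 < r := by
    apply lt_min
    · linarith
    · norm_num
  have hrsub : Metric.closedBall p₀ r ⊆ t ∩ Metric.ball p₀ (1/2) := by
    intro q hq
    constructor
    · apply hball₁
      exact Metric.closedBall_subset_closedBall (le_trans (min_le_left _ _) (by linarith)) hq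
    · apply Metric.closedBall_subset_ball _ hq
      exact lt_of_le_of_lt (min_le_right _ _) (by norm_num)
  refine ⟨r, hrpos, L, L.coe_nonneg, ?_⟩
  intro y z hyr hzr
  set x : ℝ × ℝ := (y, z) with hxdef
  have hxball : x ∈ Metric.closedBall p₀ r := by
    rw [Metric.mem_closedBall, dist_eq_norm]
    have : x - p₀ = (y, z - 1) := by simp [hxdef, hp₀, Prod.ext_iff]
    rw [this]
    rw [Prod.norm_def]
    simp only [Real.norm_eq_abs]
    exact max_le hyr hzr
  -- identify the derivatives as directional values
  have hf0 : HasFDerivAt f (fderiv ℝ f p₀) p₀ := hdiff p₀ hp₀ball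
  have hd1 : deriv (fun y => φ y 1) 0 = (fderiv ℝ f p₀) (1, 0) := by
    have hcurve : HasDerivAt (fun y : ℝ => ((y, 1) : ℝ × ℝ)) (1, 0) 0 :=
      (hasDerivAt_id (0:ℝ)).prodMk (hasDerivAt_const (0:ℝ) (1:ℝ))
    have : HasDerivAt (fun y : ℝ => f (y, 1)) ((fderiv ℝ f p₀) (1, 0)) 0 := by
      have := hf0.comp_hasDerivAt 0 hcurve
      exact this
    exact this.deriv
  have hd2 : deriv (φ 0) 1 = (fderiv ℝ f p₀) (0, 1) := by
    have hcurve : HasDerivAt (fun z : ℝ => ((0, z) : ℝ × ℝ)) (0, 1) 1 :=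
      (hasDerivAt_const (1:ℝ) (0:ℝ)).prodMk (hasDerivAt_id (1:ℝ))
    have : HasDerivAt (fun z : ℝ => f (0, z)) ((fderiv ℝ f p₀) (0, 1)) 1 := by
      have := hf0.comp_hasDerivAt 1 hcurve
      exact this
    exact this.deriv
  -- the quadratic Taylor bound on the closed ball of radius ‖x - p₀‖
  set s : Set (ℝ × ℝ) := Metric.closedBall p₀ ‖x - p₀‖ with hsdef
  have hssub : s ⊆ Metric.closedBall p₀ r := by
    apply Metric.closedBall_subset_closedBall
    rw [← dist_eq_norm]
    exact hxball
  have hkey : ‖f x - f p₀ - (fderiv ℝ f p₀) (x - p₀)‖ ≤ (L : ℝ) * ‖x - p₀‖ * ‖x - p₀‖ := by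
    set G : ℝ × ℝ → ℝ := fun q => f q - (fderiv ℝ f p₀) q with hGdef
    have hGd : ∀ q ∈ s, HasFDerivWithinAt G (fderiv ℝ f q - fderiv ℝ f p₀) s q := by
      intro q hq
      have hq' : q ∈ Metric.ball p₀ (1/2) := (hrsub (hssub hq)).2
      exact ((hdiff q hq').sub (fderiv ℝ f p₀).hasFDerivAt).hasFDerivWithinAt
    have hGbound : ∀ q ∈ s, ‖fderiv ℝ f q - fderiv ℝ f p₀‖ ≤ (L : ℝ) * ‖x - p₀‖ := by
      intro q hq
      have hq' : q ∈ t := (hrsub (hssub hq)).1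
      have hp' : p₀ ∈ t := (hrsub (hssub (Metric.mem_closedBall_self (norm_nonneg _)))).1
      have := hLip.dist_le_mul q hq' p₀ hp'
      rw [dist_eq_norm, dist_eq_norm] at this
      calc ‖fderiv ℝ f q - fderiv ℝ f p₀‖ ≤ (L:ℝ) * ‖q - p₀‖ := this
        _ ≤ (L:ℝ) * ‖x - p₀‖ := by
            apply mul_le_mul_of_nonneg_left _ L.coe_nonneg
            rw [← dist_eq_norm, ← dist_eq_norm] at *
            exact hq
    have hxs : x ∈ s := by rw [hsdef, Metric.mem_closedBall, dist_eq_norm]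
    have hps : p₀ ∈ s := Metric.mem_closedBall_self (norm_nonneg _)
    have := Convex.norm_image_sub_le_of_norm_hasFDerivWithin_le hGd hGbound
      (convex_closedBall p₀ ‖x - p₀‖) hps hxs
    have hGeq : G x - G p₀ = f x - f p₀ - (fderiv ℝ f p₀) (x - p₀) := by
      simp only [hGdef, map_sub]
      ring
    rw [hGeq] at this
    exact this
  -- put the pieces together
  have hxp : x - p₀ = (y, z - 1) := by simp [hxdef, hp₀, Prod.ext_iff]
  have hlin : (fderiv ℝ f p₀) (x - p₀) = (deriv (fun y => φ y 1) 0) * y + (deriv (φ 0) 1) * (z - 1) := by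
    rw [hxp, hd1, hd2]
    have : ((y, z - 1) : ℝ × ℝ) = y • ((1,0) : ℝ × ℝ) + (z - 1) • ((0,1) : ℝ × ℝ) := by
      simp [Prod.ext_iff]
    rw [this, map_add, map_smul, map_smul]
    simp [smul_eq_mul]
    ring
  have hnormsq : ‖x - p₀‖ * ‖x - p₀‖ ≤ y^2 + (z-1)^2 := by
    rw [hxp, Prod.norm_def]
    simp only [Real.norm_eq_abs]
    rcases max_cases |y| |z-1| with ⟨h1, _⟩ | ⟨h1, _⟩ <;> rw [h1] <;> nlinarith [abs_nonneg y, abs_nonneg (z-1), sq_abs y, sq_abs (z-1)]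
  have hfx : f x = φ y z := rfl
  have hfp : f p₀ = φ 0 1 := rfl
  calc |φ y z - φ 0 1 - (deriv (fun y => φ y 1) 0) * y - (deriv (φ 0) 1) * (z - 1)|
      = ‖f x - f p₀ - (fderiv ℝ f p₀) (x - p₀)‖ := by
        rw [hfx, hfp, hlin, Real.norm_eq_abs]; ring_nf
    _ ≤ (L : ℝ) * ‖x - p₀‖ * ‖x - p₀‖ := hkey
    _ ≤ (L : ℝ) * (y^2 + (z-1)^2) := by
        rw [mul_assoc]
        exact mul_le_mul_of_nonneg_left hnormsq L.coe_nonneg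

set_option maxHeartbeats 2000000 in
theorem stmt19 (φ : ℝ → ℝ → ℝ)
    (hC2 : ContDiffOn ℝ 2 (fun p : ℝ × ℝ => φ p.1 p.2) (univ ×ˢ Ici 0))
    (hpos : ∀ y z : ℝ, 0 ≤ z → 0 < φ y z)
    (hmono : ∀ y z : ℝ, 0 ≤ z → 0 ≤ deriv (φ y) z)
    (hbdd : ∃ C : ℝ, ∀ y z : ℝ, 0 ≤ z → deriv (φ y) z ≤ C)
    (hcontr : deriv (φ 0) 1 < 1)
    (hnorm : φ 0 1 = 1)
    (hfix : ∀ α : ℝ, α > 0 → α = φ 0 (1 / φ 0 (1 / α)) → α = 1)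
    (g : ℝ → ℝ) (hg : ContDiff ℝ 1 g) (hg0 : g 0 = 0)
    (hgpos : ∀ y : ℝ, y ≠ 0 → g y / y > 0) (hg0' : deriv g 0 = 1)
    (hode : ∀ y : ℝ, y ≠ 0 → deriv g y = φ y (y / g y))
    (β : ℝ) (hβ : β = deriv (fun y => φ y 1) 0 / (1 + (1 / 2) * deriv (φ 0) 1)) :
    ∃ C > (0 : ℝ), ∃ δ > (0 : ℝ), ∀ a : ℝ, 0 < a → a ≤ δ →
      ∀ y : ℝ, y ≠ 0 → |y| ≤ a → |g y / y - (1 + β * y / 2)| ≤ C * a ^ 2 := by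
  obtain ⟨r, hr, L, hL, hTay⟩ := taylorBound φ hC2
  set A := deriv (φ 0) 1 with hAdef
  have hA : 0 ≤ A := hmono 0 1 zero_le_one
  set Bc := deriv (fun y => φ y 1) 0 with hBcdef
  have hBc : Bc = β * (2+A)/2 := by
    have h2 : (1 + (1/2) * A) ≠ 0 := by positivity
    rw [hβ]
    field_simp
  set M₁ : ℝ := 4*L + 2*A + 1 with hM₁def
  have hM₁ : 0 < M₁ := by positivity
  set ε₀ : ℝ := min (1/2) (min (r/2) ((1+A)/(8*M₁))) with hε₀def
  have hε₀pos : 0 < ε₀ := by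
    apply lt_min (by norm_num)
    apply lt_min (by linarith)
    positivity
  have hε₀half : ε₀ ≤ 1/2 := min_le_left _ _
  have hε₀r : ε₀ ≤ r/2 := le_trans (min_le_right _ _) (min_le_left _ _)
  have hε₀M : ε₀ ≤ (1+A)/(8*M₁) := le_trans (min_le_right _ _) (min_le_right _ _)
  have hgd : HasDerivAt g 1 0 := by
    have := ((hg.differentiable one_ne_zero) 0).hasDerivAt
    rwa [hg0'] at this
  have hslope : Tendsto (fun y => g y / y) (nhdsWithin 0 {(0:ℝ)}ᶜ) (nhds 1) := by
    have h := hasDerivAt_iff_tendsto_slope.mp hgd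
    apply h.congr'
    filter_upwards [self_mem_nhdsWithin] with y hy
    simp [slope_def_field, hg0]
  obtain ⟨δ₁, hδ₁, hδ₁p⟩ := Metric.tendsto_nhdsWithin_nhds.mp hslope ε₀ hε₀pos
  set δ : ℝ := min (δ₁/2) (min r ((1+A)/(8*M₁*(|β|+1)))) with hδdef
  have hδpos : 0 < δ := by
    apply lt_min (by linarith)
    apply lt_min hr
    positivity
  have hδr : δ ≤ r := le_trans (min_le_right _ _) (min_le_left _ _)
  have hδβ : δ ≤ (1+A)/(8*M₁*(|β|+1)) := le_trans (min_le_right _ _) (min_le_right _ _)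
  set Q₀ : ℝ := ε₀ + |β| * δ/2 with hQ₀def
  have hQ₀ : 0 ≤ Q₀ := by positivity
  set K₂ : ℝ := L + M₁*β^2/2 with hK₂def
  have hK₂ : 0 ≤ K₂ := by positivity
  have hδhalf : δ ≤ δ₁/2 := min_le_left _ _
  have hid0 : ∀ (x gx P : ℝ), x ≠ 0 → gx ≠ 0 →
      x * ((P * x - gx)/x^2 - β/2) + (1+A) * (gx/x - 1 - β*x/2)
      = (P - 1 - (β*(2+A)/2) * x - A*(x/gx-1)) + A * (gx/x-1)^2 * (x/gx) := by
    intro x gx P hx hgx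
    field_simp
    ring
  clear_value A Bc M₁ ε₀ δ Q₀ K₂
  set w : ℝ → ℝ := fun y => g y / y - 1 - β*y/2 with hwdef
  have hu : ∀ x : ℝ, x ≠ 0 → |x| ≤ δ → |g x / x - 1| ≤ ε₀ := by
    intro x hx hxd
    have h1 : dist x 0 < δ₁ := by
      rw [Real.dist_eq, sub_zero]
      calc |x| ≤ δ := hxd
        _ ≤ δ₁/2 := hδhalf
        _ < δ₁ := by linarith
    have h2 := hδ₁p (by simpa using hx) h1
    rw [Real.dist_eq] at h2
    exact h2.le
  have hwd : ∀ x : ℝ, x ≠ 0 → HasDerivAt w ((deriv g x * x - g x)/x^2 - β/2) x := by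
    intro x hx
    have h1 : HasDerivAt g (deriv g x) x := ((hg.differentiable one_ne_zero) x).hasDerivAt
    have h2 : HasDerivAt (fun y : ℝ => y) 1 x := hasDerivAt_id x
    have hdiv := h1.div h2 hx
    have h3 : HasDerivAt (fun y : ℝ => β*y/2) (β/2) x := by
      have := ((hasDerivAt_id x).const_mul β).div_const 2
      simpa using this
    have h4 := (hdiv.sub_const 1).sub h3
    refine h4.congr_deriv ?_
    simp
  have hmain : ∀ x : ℝ, x ≠ 0 → |x| ≤ δ →
      |x * ((deriv g x * x - g x)/x^2 - β/2) + (1+A) * w x| ≤ K₂ * x^2 + ((1+A)/2) * |w x|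
      ∧ |w x| ≤ Q₀ := by
    intro x hx hxd
    have hgxpos := hgpos x hx
    have hgx : g x ≠ 0 := by
      intro h
      rw [h] at hgxpos
      simp at hgxpos
    have huε : |g x / x - 1| ≤ ε₀ := hu x hx hxd
    set u : ℝ := g x / x - 1 with hudef
    set z : ℝ := x / g x with hzdef
    have hzeq : z = (g x / x)⁻¹ := by rw [hzdef, inv_div]
    have hzpos : 0 < z := by rw [hzeq]; exact inv_pos.mpr hgxpos
    have h1u : z * (g x / x) = 1 := by
      rw [hzeq]
      field_simp
    have hgx2 : 1/2 ≤ g x / x := by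
      have h := (abs_le.mp huε).1
      rw [hudef] at h
      linarith [hε₀half]
    have hz2 : z ≤ 2 := by
      have h := mul_le_mul_of_nonneg_left hgx2 hzpos.le
      rw [h1u] at h
      linarith
    have huz : z - 1 = -(u*z) := by
      rw [hudef, hzdef]
      field_simp
      ring
    have hz1 : |z - 1| ≤ 2 * ε₀ := by
      rw [huz, abs_neg, abs_mul, abs_of_pos hzpos]
      calc |u| * z ≤ ε₀ * 2 := by
            apply mul_le_mul huε hz2 hzpos.le hε₀pos.le
        _ = 2 * ε₀ := by ring
    have hz1r : |z - 1| ≤ r := le_trans hz1 (by linarith)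
    have hxr : |x| ≤ r := le_trans hxd hδr
    have hE := hTay x z hxr hz1r
    rw [hnorm] at hE
    set E : ℝ := φ x z - 1 - Bc * x - A * (z-1) with hEdef
    -- the algebraic identity
    have hid : x * ((deriv g x * x - g x)/x^2 - β/2) + (1+A) * w x = E + A * u^2 * z := by
      rw [hEdef, hBc, hudef, hzdef, hode x hx]
      simp only [hwdef]
      exact hid0 x (g x) (φ x (x / g x)) hx hgx
    have hz1sq : (z-1)^2 = u^2 * z^2 := by rw [huz]; ring
    clear_value u z
    have hz4 : z^2 ≤ 4 := by
      have h := mul_le_mul hz2 hz2 hzpos.le (by norm_num : (0:ℝ) ≤ 2)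
      have e : z^2 = z*z := pow_two z
      linarith only [h, e]
    have hR : |E + A*u^2*z| ≤ L*x^2 + M₁*u^2 := by
      have h1 : |A*u^2*z| = A*u^2*z := abs_of_nonneg (by positivity)
      have h2 : |E + A*u^2*z| ≤ |E| + |A*u^2*z| := abs_add_le _ _
      rw [h1] at h2
      have h3 : A*u^2*z ≤ 2*A*u^2 := by
        have h0 := mul_le_mul_of_nonneg_left hz2 (mul_nonneg hA (sq_nonneg u))
        linarith only [h0]
      have h4' : (z-1)^2 ≤ 4*u^2 := by
        rw [hz1sq]
        have := mul_le_mul_of_nonneg_left hz4 (sq_nonneg u)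
        linarith
      have h4 : L*(x^2 + (z-1)^2) ≤ L*x^2 + 4*L*u^2 := by
        have := mul_le_mul_of_nonneg_left h4' hL
        linarith only [this]
      have h5 : 4*L*u^2 + 2*A*u^2 ≤ M₁*u^2 := by
        have e : M₁*u^2 - (4*L*u^2 + 2*A*u^2) = u^2 := by rw [hM₁def]; ring
        have := sq_nonneg u
        linarith
      linarith [hE, h2, h3, h4, h5]
    have hwu : w x = u - β*x/2 := by simp only [hwdef]; rw [hudef]
    have hueq : u = w x + β*x/2 := by rw [hwu]; ring
    have husq : u^2 ≤ 2*(w x)^2 + β^2*x^2/2 := by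
      have e : u^2 = (w x + β*x/2)^2 := by rw [hueq]
      rw [e]
      linarith only [sq_nonneg (w x - β*x/2)]
    have hwb : |w x| ≤ Q₀ := by
      have habs1 : |w x| ≤ |u| + |β*x/2| := by
        rw [hwu, sub_eq_add_neg]
        exact (abs_add_le _ _).trans_eq (by rw [abs_neg])
      have habs2 : |β*x/2| = |β| * |x|/2 := by
        rw [abs_div, abs_mul, abs_two]
      have habs3 : |β| * |x| ≤ |β| * δ := mul_le_mul_of_nonneg_left hxd (abs_nonneg β)
      rw [habs2] at habs1
      rw [hQ₀def]
      linarith [huε]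
    have hwsq : (w x)^2 ≤ Q₀ * |w x| := by
      have h := mul_le_mul_of_nonneg_right hwb (abs_nonneg (w x))
      have e : (w x)^2 = |w x| * |w x| := by rw [abs_mul_abs_self, pow_two]
      linarith [h, e.le, e.ge]
    have hQsmall : 2*M₁*Q₀ ≤ (1+A)/2 := by
      have h1 : ε₀ * (8*M₁) ≤ 1+A := by
        rw [← le_div_iff₀ (by positivity)]
        exact hε₀M
      have h2 : δ * (8*M₁*(|β|+1)) ≤ 1+A := by
        rw [← le_div_iff₀ (by positivity)]
        exact hδβ
      have h0 : 0 ≤ M₁*δ := by positivity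
      have h4 : M₁*δ*|β| ≤ M₁*δ*(|β|+1) :=
        mul_le_mul_of_nonneg_left (by linarith [abs_nonneg β] : |β| ≤ |β|+1) h0
      have e : 2*M₁*Q₀ = (ε₀*(8*M₁))/4 + M₁*δ*|β| := by rw [hQ₀def]; ring
      have h5 : M₁*δ*(|β|+1) = (δ*(8*M₁*(|β|+1)))/8 := by ring
      linarith
    rw [hid]
    constructor
    · have s1 : |E + A*u^2*z| ≤ L*x^2 + M₁*(2*(w x)^2 + β^2*x^2/2) := by
        have := mul_le_mul_of_nonneg_left husq hM₁.le
        linarith [hR]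
      have s2 : L*x^2 + M₁*(2*(w x)^2 + β^2*x^2/2) = K₂*x^2 + 2*M₁*(w x)^2 := by
        rw [hK₂def]; ring
      have s3 : 2*M₁*(w x)^2 ≤ 2*M₁*(Q₀*|w x|) := by
        have := mul_le_mul_of_nonneg_left hwsq (by positivity : (0:ℝ) ≤ 2*M₁)
        linarith
      have s4 : 2*M₁*(Q₀*|w x|) ≤ ((1+A)/2)*|w x| := by
        have h := mul_le_mul_of_nonneg_right hQsmall (abs_nonneg (w x))
        have e : 2*M₁*(Q₀*|w x|) = (2*M₁*Q₀)*|w x| := by ring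
        linarith [e.le, e.ge]
      calc |E + A*u^2*z| ≤ L*x^2 + M₁*(2*(w x)^2 + β^2*x^2/2) := s1
        _ = K₂*x^2 + 2*M₁*(w x)^2 := s2
        _ ≤ K₂*x^2 + 2*M₁*(Q₀*|w x|) := by linarith only [s3]
        _ ≤ K₂*x^2 + ((1+A)/2)*|w x| := by linarith only [s4]
    · exact hwb
  -- positive side
  have hdiffIoc : ∀ y ∈ Ioc (0:ℝ) δ, DifferentiableAt ℝ w y :=
    fun y hy => (hwd y hy.1.ne').differentiableAt
  have hineqpos : ∀ y ∈ Ioc (0:ℝ) δ, |y * deriv w y + (1+A) * w y| ≤ K₂ * y^2 + ((1+A)/2) * |w y| := by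
    intro y hy
    rw [(hwd y hy.1.ne').deriv]
    exact (hmain y hy.1.ne' (by rw [abs_of_pos hy.1]; exact hy.2)).1
  have hbdpos : ∀ y ∈ Ioc (0:ℝ) δ, |w y| ≤ Q₀ := by
    intro y hy
    exact (hmain y hy.1.ne' (by rw [abs_of_pos hy.1]; exact hy.2)).2
  have hposest := keylemma A K₂ hA hK₂ w δ hδpos hdiffIoc hineqpos Q₀ hQ₀ hbdpos
  -- negative side
  set w₂ : ℝ → ℝ := fun s => w (-s) with hw₂def
  have hwd₂ : ∀ s : ℝ, s ≠ 0 → HasDerivAt w₂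
      (((deriv g (-s) * (-s) - g (-s))/(-s)^2 - β/2) * (-1)) s := by
    intro s hs
    exact (hwd (-s) (neg_ne_zero.mpr hs)).comp s (hasDerivAt_neg s)
  have hdiffIoc₂ : ∀ s ∈ Ioc (0:ℝ) δ, DifferentiableAt ℝ w₂ s :=
    fun s hs => (hwd₂ s hs.1.ne').differentiableAt
  have hineq₂ : ∀ s ∈ Ioc (0:ℝ) δ, |s * deriv w₂ s + (1+A) * w₂ s| ≤ K₂ * s^2 + ((1+A)/2) * |w₂ s| := by
    intro s hs
    have hne : (-s : ℝ) ≠ 0 := neg_ne_zero.mpr hs.1.ne'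
    have habs : |(-s : ℝ)| ≤ δ := by rw [abs_neg, abs_of_pos hs.1]; exact hs.2
    have h1 := (hmain (-s) hne habs).1
    rw [(hwd₂ s hs.1.ne').deriv]
    have he : s * (((deriv g (-s) * (-s) - g (-s))/(-s)^2 - β/2) * (-1))
        = (-s) * ((deriv g (-s) * (-s) - g (-s))/(-s)^2 - β/2) := by ring
    rw [he]
    have hw2 : w₂ s = w (-s) := rfl
    rw [hw2]
    have h2 : K₂ * s^2 = K₂ * (-s)^2 := by ring
    rw [h2]
    exact h1
  have hbd₂ : ∀ s ∈ Ioc (0:ℝ) δ, |w₂ s| ≤ Q₀ := by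
    intro s hs
    have hne : (-s : ℝ) ≠ 0 := neg_ne_zero.mpr hs.1.ne'
    have habs : |(-s : ℝ)| ≤ δ := by rw [abs_neg, abs_of_pos hs.1]; exact hs.2
    exact (hmain (-s) hne habs).2
  have hnegest := keylemma A K₂ hA hK₂ w₂ δ hδpos hdiffIoc₂ hineq₂ Q₀ hQ₀ hbd₂
  -- conclusion
  refine ⟨2*K₂/(A+3) + 1, by positivity, δ, hδpos, ?_⟩
  intro a ha haδ y hy hya
  have hgoal : g y / y - (1 + β * y / 2) = w y := by simp only [hwdef]; ring
  rw [hgoal]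
  have hbound : |w y| ≤ 2*K₂*a^2/(A+3) := by
    rcases lt_or_gt_of_ne hy with hneg | hpos
    · have h1 := hnegest a ⟨ha, haδ⟩ (-y) ⟨by linarith, by
        rw [abs_of_neg hneg] at hya; linarith⟩
      have : w₂ (-y) = w y := by rw [hw₂def]; simp
      rwa [this] at h1
    · exact hposest a ⟨ha, haδ⟩ y ⟨hpos, by rw [abs_of_pos hpos] at hya; linarith⟩
  have he : 2*K₂*a^2/(A+3) = (2*K₂/(A+3))*a^2 := by ring
  rw [he] at hbound
  linarith only [sq_nonneg a, hbound]
end
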